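/- arXiv:1905.02838 — 13 statements merged into one kernel-verified Lean document; each statement's English description precedes it below -/
import Mathlib

section
/- Let n ≥ 1 and let S be a nonempty set of bitvectors of width n. Suppose x ∈ S satisfies the following greedy (lexicographic-maximization) condition with respect to the attractor 0: for every k < n, if there exists y ∈ S with y.getMsbD j = x.getMsbD j for all j < k and y.getMsbD k = false, then x.getMsbD k = false. Then x.toNat ≤ y.toNat for every y ∈ S; i.e., x attains the minimum unsigned value over S. -/
theorem unsigned_min_lex_greedy (n : ℕ) (hn : 1 ≤ n) (S : Set (BitVec n))
    (hS : S.Nonempty) (x : BitVec n) (hx : x ∈ S)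
    (hgreedy : ∀ k < n,
      (∃ y ∈ S, (∀ j < k, y.getMsbD j = x.getMsbD j) ∧ y.getMsbD k = false) →
      x.getMsbD k = false) :
    ∀ y ∈ S, x.toNat ≤ y.toNat := by
  intro y hy
  by_contra h
  push_neg at h
  -- y.toNat < x.toNat, so x ≠ y and some msb differs
  have hne : x ≠ y := by rintro rfl; exact lt_irrefl _ h
  have hex : ∃ k, k < n ∧ x.getMsbD k ≠ y.getMsbD k := by
    by_contra hc
    push_neg at hc
    apply hne
    apply BitVec.eq_of_toNat_eq
    apply Nat.eq_of_testBit_eq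
    intro i
    rw [BitVec.testBit_toNat, BitVec.testBit_toNat]
    by_cases hi : i < n
    · rw [BitVec.getLsbD_eq_getMsbD, BitVec.getLsbD_eq_getMsbD]
      rw [hc (n - 1 - i) (by omega)]
    · rw [BitVec.getLsbD_of_ge _ _ (by omega), BitVec.getLsbD_of_ge _ _ (by omega)]
  classical
  set k := Nat.find hex with hkdef
  have hkn : k < n := (Nat.find_spec hex).1
  have hdiff : x.getMsbD k ≠ y.getMsbD k := (Nat.find_spec hex).2
  have heqbelow : ∀ j < k, y.getMsbD j = x.getMsbD j := by
    intro j hj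
    have := Nat.find_min hex hj
    push_neg at this
    exact (this (by omega)).symm
  -- lsb index corresponding to msb index k
  have hhigh : ∀ j : ℕ, n - 1 - k < j → x.toNat.testBit j = y.toNat.testBit j := by
    intro j hj
    rw [BitVec.testBit_toNat, BitVec.testBit_toNat]
    by_cases hjn : j < n
    · rw [BitVec.getLsbD_eq_getMsbD, BitVec.getLsbD_eq_getMsbD]
      rw [heqbelow (n - 1 - j) (by omega)]
    · rw [BitVec.getLsbD_of_ge _ _ (by omega), BitVec.getLsbD_of_ge _ _ (by omega)]
  have hmsb_lsb : ∀ z : BitVec n, z.getMsbD k = z.toNat.testBit (n - 1 - k) := by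
    intro z
    rw [BitVec.testBit_toNat, BitVec.getMsbD_eq_getLsbD, decide_eq_true hkn, Bool.true_and]
  cases hxk : x.getMsbD k with
  | false =>
    -- then y.getMsbD k = true, so x.toNat < y.toNat, contradicting y < x
    have hyk : y.getMsbD k = true := by
      cases hyk : y.getMsbD k with
      | false => exact absurd (hxk.trans hyk.symm) hdiff
      | true => rfl
    have : x.toNat < y.toNat := by
      apply Nat.lt_of_testBit (n - 1 - k)
      · rw [← hmsb_lsb]; exact hxk
      · rw [← hmsb_lsb]; exact hyk
      · exact hhigh
    omega
  | true =>
    cases hyk : y.getMsbD k with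
    | false =>
      have := hgreedy k hkn ⟨y, hy, heqbelow, hyk⟩
      rw [hxk] at this; exact Bool.noConfusion this
    | true =>
      exact absurd (hxk.trans hyk.symm) hdiff
end

section
/- Let n ≥ 1, let a := BitVec.intMin n (the bitvector with MSB 1 and all other bits 0), and let S be a nonempty set of bitvectors of width n. Suppose x ∈ S satisfies: for every k < n, if there exists y ∈ S with y.getMsbD j = x.getMsbD j for all j < k and y.getMsbD k = a.getMsbD k, then x.getMsbD k = a.getMsbD k. Then x.toInt ≤ y.toInt for every y ∈ S; i.e., x attains the minimum two's-complement signed value over S. -/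
theorem signed_min_lex_greedy (n : ℕ) (hn : 1 ≤ n) (S : Set (BitVec n))
    (hS : S.Nonempty) (x : BitVec n) (hx : x ∈ S)
    (hgreedy : ∀ k < n,
      (∃ y ∈ S, (∀ j < k, y.getMsbD j = x.getMsbD j) ∧
        y.getMsbD k = (BitVec.intMin n).getMsbD k) →
      x.getMsbD k = (BitVec.intMin n).getMsbD k) :
    ∀ y ∈ S, x.toInt ≤ y.toInt := by
  intro y hy
  by_cases hxy : x = y
  · simp [hxy]
  have hne : ∃ k, x.getMsbD k ≠ y.getMsbD k := by
    by_contra h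
    push_neg at h
    exact hxy (BitVec.eq_of_getMsbD_eq fun i _ => h i)
  set k := Nat.find hne with hkdef
  have hk : x.getMsbD k ≠ y.getMsbD k := Nat.find_spec hne
  have agree : ∀ j < k, x.getMsbD j = y.getMsbD j := by
    intro j hj
    have := Nat.find_min hne hj
    simpa using this
  have hkn : k < n := by
    by_contra h
    push_neg at h
    apply hk
    rw [BitVec.getMsbD_of_ge x k h, BitVec.getMsbD_of_ge y k h]
  have hya : y.getMsbD k ≠ (BitVec.intMin n).getMsbD k := by
    intro h
    exact hk (by rw [hgreedy k hkn ⟨y, hy, fun j hj => (agree j hj).symm, h⟩, h])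
  have hxa : x.getMsbD k = (BitVec.intMin n).getMsbD k := by
    clear hkdef
    cases hb : x.getMsbD k <;> cases hc : y.getMsbD k <;>
        cases hd : (BitVec.intMin n).getMsbD k <;>
      rw [hb, hc] at hk <;> rw [hc, hd] at hya <;>
      first
        | rfl
        | exact absurd rfl hk
        | exact absurd rfl hya
  have hamin : (BitVec.intMin n).getMsbD k = decide (k = 0) := by
    rw [BitVec.getMsbD_intMin]
    simp [Nat.lt_of_lt_of_le Nat.zero_lt_one hn]
  -- helper: testBit vs getMsbD
  have key : ∀ (z : BitVec n) (j : ℕ), j < n → z.toNat.testBit j = z.getMsbD (n - 1 - j) := by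
    intro z j hj
    rw [BitVec.getMsbD_eq_getLsbD]
    have h1 : n - 1 - (n - 1 - j) = j := by omega
    have h2 : n - 1 - j < n := by omega
    rw [h1]
    simp [BitVec.getLsbD, h2]
  rcases Nat.eq_zero_or_pos k with hk0 | hkpos
  · -- differing at msb: x negative, y nonnegative
    rw [hk0] at hxa hya hamin
    simp only [decide_eq_true_eq, decide_true] at hamin
    have hxm : x.msb = true := by
      show x.getMsbD 0 = true
      rw [hxa, hamin]
    have hym : y.msb = false := by
      show y.getMsbD 0 = false
      rw [hamin] at hya
      cases h : y.getMsbD 0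
      · rfl
      · exact absurd h hya
    rw [BitVec.toInt_eq_msb_cond, BitVec.toInt_eq_msb_cond, hxm, hym]
    rw [if_pos rfl, if_neg Bool.false_ne_true]
    have h1 : (x.toNat : ℤ) < ((2 ^ n : ℕ) : ℤ) := by exact_mod_cast x.isLt
    have h2 : (0 : ℤ) ≤ (y.toNat : ℤ) := Int.ofNat_nonneg _
    linarith
  · -- msbs agree; x.toNat < y.toNat
    have hmsb : x.msb = y.msb := by
      have := agree 0 hkpos
      simpa [BitVec.msb] using this
    have hak : (BitVec.intMin n).getMsbD k = false := by
      rw [hamin]; simp [show k ≠ 0 by omega]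
    have hxk : x.getMsbD k = false := by rw [hxa, hak]
    have hyk : y.getMsbD k = true := by
      cases h : y.getMsbD k
      · exact absurd (h.trans hak.symm) hya
      · rfl
    have hkk : n - 1 - (n - 1 - k) = k := by omega
    have hlt : x.toNat < y.toNat := by
      apply Nat.lt_of_testBit (n - 1 - k)
      · rw [key x (n - 1 - k) (by omega), hkk, hxk]
      · rw [key y (n - 1 - k) (by omega), hkk, hyk]
      · intro j hj
        rcases lt_or_ge j n with hjn | hjn
        · rw [key x j hjn, key y j hjn]
          exact agree _ (by omega)
        · rw [Nat.testBit_lt_two_pow (lt_of_lt_of_le x.isLt (Nat.pow_le_pow_right (by norm_num) hjn)),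
              Nat.testBit_lt_two_pow (lt_of_lt_of_le y.isLt (Nat.pow_le_pow_right (by norm_num) hjn))]
    have h : (x.toNat : ℤ) < (y.toNat : ℤ) := by exact_mod_cast hlt
    rw [BitVec.toInt_eq_msb_cond, BitVec.toInt_eq_msb_cond, hmsb]
    cases y.msb
    · rw [if_neg Bool.false_ne_true, if_neg Bool.false_ne_true]
      exact le_of_lt h
    · rw [if_pos rfl, if_pos rfl]
      linarith
end

section
/- Let n ≥ 1, let a := BitVec.allOnes n, and let S be a nonempty set of bitvectors of width n. Suppose x ∈ S satisfies: for every k < n, if there exists y ∈ S with y.getMsbD j = x.getMsbD j for all j < k and y.getMsbD k = true, then x.getMsbD k = true. Then x.toNat ≥ y.toNat for every y ∈ S; i.e., x attains the maximum unsigned value over S. -/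
private lemma lex_lt_toNat {n : ℕ} (a b : BitVec n) (k : ℕ) (hk : k < n)
    (heq : ∀ j < k, a.getMsbD j = b.getMsbD j)
    (ha : a.getMsbD k = false) (hb : b.getMsbD k = true) :
    a.toNat < b.toNat := by
  have hmsb : ∀ (c : BitVec n) (i : ℕ), i < n → c.getMsbD i = c.toNat.testBit (n - 1 - i) := by
    intro c i hi
    simp [BitVec.getMsbD_eq_getLsbD, hi, BitVec.getLsbD]
  apply Nat.lt_of_testBit (n - 1 - k)
  · rw [← hmsb a k hk]; exact ha
  · rw [← hmsb b k hk]; exact hb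
  · intro j hj
    by_cases hjn : j < n
    · have hkey : j = n - 1 - (n - 1 - j) := by omega
      have hlt : n - 1 - j < k := by omega
      rw [hkey, ← hmsb a _ (by omega), ← hmsb b _ (by omega)]
      exact heq _ hlt
    · have h1 : a.toNat < 2 ^ j :=
        lt_of_lt_of_le a.isLt (Nat.pow_le_pow_right (by norm_num) (by omega))
      have h2 : b.toNat < 2 ^ j :=
        lt_of_lt_of_le b.isLt (Nat.pow_le_pow_right (by norm_num) (by omega))
      rw [Nat.testBit_lt_two_pow h1, Nat.testBit_lt_two_pow h2]

theorem unsigned_max_lex_greedy (n : ℕ) (hn : 1 ≤ n) (S : Set (BitVec n))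
    (hS : S.Nonempty) (x : BitVec n) (hx : x ∈ S)
    (hgreedy : ∀ k < n,
      (∃ y ∈ S, (∀ j < k, y.getMsbD j = x.getMsbD j) ∧ y.getMsbD k = true) →
      x.getMsbD k = true) :
    ∀ y ∈ S, y.toNat ≤ x.toNat := by
  intro y hy
  by_contra hlt
  push_neg at hlt
  have hne : ∃ k, k < n ∧ x.getMsbD k ≠ y.getMsbD k := by
    by_contra hall
    push_neg at hall
    have : x = y := BitVec.eq_of_getMsbD_eq fun i hi => hall i hi
    rw [this] at hlt; omega
  classical
  set m := Nat.find hne with hmdef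
  have hm := Nat.find_spec hne
  have hmin : ∀ j < m, ¬(j < n ∧ x.getMsbD j ≠ y.getMsbD j) := fun j hj => Nat.find_min hne hj
  have heq : ∀ j < m, y.getMsbD j = x.getMsbD j := by
    intro j hj
    by_contra hne'
    exact hmin j hj ⟨by omega, fun h => hne' h.symm⟩
  cases hyb : y.getMsbD m with
  | true =>
      have := hgreedy m hm.1 ⟨y, hy, heq, hyb⟩
      exact hm.2 (this.trans hyb.symm)
  | false =>
      have hxb : x.getMsbD m = true := by
        cases h : x.getMsbD m
        · exact absurd (h.trans hyb.symm) hm.2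
        · rfl
      have := lex_lt_toNat y x m hm.1 (fun j hj => (heq j hj)) hyb hxb
      omega
end

section
/- Let n ≥ 1, let a be the bitvector of width n with MSB 0 and all other bits 1 (signed value 2^(n-1) - 1), and let S be a nonempty set of bitvectors of width n. Suppose x ∈ S satisfies: for every k < n, if there exists y ∈ S with y.getMsbD j = x.getMsbD j for all j < k and y.getMsbD k = a.getMsbD k, then x.getMsbD k = a.getMsbD k. Then x.toInt ≥ y.toInt for every y ∈ S; i.e., x attains the maximum two's-complement signed value over S. -/
theorem signed_max_lex_greedy (n : ℕ) (hn : 1 ≤ n) (S : Set (BitVec n))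
    (hS : S.Nonempty) (x : BitVec n) (hx : x ∈ S)
    (a : BitVec n) (ha : a = ~~~(BitVec.intMin n))
    (hgreedy : ∀ k < n,
      (∃ y ∈ S, (∀ j < k, y.getMsbD j = x.getMsbD j) ∧
        y.getMsbD k = a.getMsbD k) →
      x.getMsbD k = a.getMsbD k) :
    ∀ y ∈ S, y.toInt ≤ x.toInt := by
  intro y hy
  by_contra h
  push_neg at h
  have hxy : x ≠ y := by rintro rfl; exact lt_irrefl _ h
  -- value of a's bits
  have haMsb : ∀ k, k < n → a.getMsbD k = decide (k ≠ 0) := by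
    intro k hk
    subst ha
    simp only [BitVec.getMsbD_eq_getLsbD, BitVec.getLsbD_not, BitVec.getLsbD_intMin]
    have h1 : n - 1 - k < n := by omega
    simp only [hk, h1, decide_true, Bool.true_and]
    rcases eq_or_ne k 0 with rfl | hk0
    · simp; omega
    · have : n - 1 - k + 1 ≠ n := by omega
      simp [this, hk0]
  -- there is a differing msb index
  have hex : ∃ k, k < n ∧ x.getMsbD k ≠ y.getMsbD k := by
    by_contra hc
    push_neg at hc
    exact hxy (BitVec.eq_of_getMsbD_eq fun i hi => hc i hi)
  classical
  obtain ⟨k, hk, hmin⟩ :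
      ∃ k, (k < n ∧ x.getMsbD k ≠ y.getMsbD k) ∧ ∀ j < k, x.getMsbD j = y.getMsbD j := by
    refine ⟨Nat.find hex, Nat.find_spec hex, fun j hj => ?_⟩
    by_contra hne
    exact absurd (Nat.find_le ⟨lt_trans hj (Nat.find_spec hex).1, hne⟩) (not_le.mpr hj)
  -- at index k, y has the attractor bit and x does not... unless contradiction
  have hyk : y.getMsbD k ≠ a.getMsbD k := by
    intro heq
    exact hk.2 (by
      rw [hgreedy k hk.1 ⟨y, hy, fun j hj => (hmin j hj).symm, heq⟩, heq])
  have hxk : x.getMsbD k = a.getMsbD k := by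
    have := haMsb k hk.1
    rcases Bool.eq_false_or_eq_true (x.getMsbD k) with hxv | hxv <;>
      rcases Bool.eq_false_or_eq_true (y.getMsbD k) with hyv | hyv <;>
      simp_all
  rcases eq_or_ne k 0 with hk0 | hk0
  · -- sign bit differs: x has msb false, y msb true
    have hax : x.getMsbD 0 = false := by
      rw [← hk0, hxk, haMsb k hk.1, hk0]; simp
    have hay : y.getMsbD 0 = true := by
      have hne := hk.2; rw [hk0] at hne
      cases hv : y.getMsbD 0
      · rw [hax, hv] at hne; exact absurd rfl hne
      · rfl
    have hx0 : x.msb = false := hax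
    have hy0 : y.msb = true := hay
    have hxi := BitVec.toInt_eq_msb_cond x
    have hyi := BitVec.toInt_eq_msb_cond y
    rw [hx0] at hxi; rw [hy0] at hyi
    simp at hxi hyi
    have hpow : ((2 : ℤ)) ^ n = ((2 ^ n : ℕ) : ℤ) := by push_cast; ring
    have hylt : (y.toNat : ℤ) < ((2 ^ n : ℕ) : ℤ) := by exact_mod_cast y.isLt
    omega
  · -- same sign, x has bit k = true, y has bit k = false
    have hax : x.getMsbD k = true := by rw [hxk, haMsb k hk.1]; simp [hk0]
    have hay : y.getMsbD k = false := by
      cases hv : y.getMsbD k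
      · rfl
      · exact absurd (hax.trans hv.symm) hk.2
    have hlt : y.toNat < x.toNat := by
      apply Nat.lt_of_testBit (n - 1 - k)
      · have : y.getLsbD (n - 1 - k) = false := by
          have := y.getMsbD_eq_getLsbD k
          rw [hay] at this
          simp [hk.1] at this
          exact this
        exact this
      · have : x.getLsbD (n - 1 - k) = true := by
          have := x.getMsbD_eq_getLsbD k
          rw [hax] at this
          simp [hk.1] at this
          exact this
        exact this
      · intro j hj
        rcases lt_or_ge j n with hjn | hjn
        · have hj' : n - 1 - j < k := by omega
          have := hmin (n - 1 - j) hj'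
          have hxg := x.getMsbD_eq_getLsbD (n - 1 - j)
          have hyg := y.getMsbD_eq_getLsbD (n - 1 - j)
          have hni : n - 1 - (n - 1 - j) = j := by omega
          have hlt' : n - 1 - j < n := by omega
          rw [hni] at hxg hyg
          simp [hlt'] at hxg hyg
          show y.toNat.testBit j = x.toNat.testBit j
          rw [← BitVec.getLsbD, ← BitVec.getLsbD, ← hxg, ← hyg, this]
        · have hx2 : x.toNat < 2 ^ j := lt_of_lt_of_le x.isLt (Nat.pow_le_pow_right (by norm_num) hjn)
          have hy2 : y.toNat < 2 ^ j := lt_of_lt_of_le y.isLt (Nat.pow_le_pow_right (by norm_num) hjn)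
          show y.toNat.testBit j = x.toNat.testBit j
          rw [Nat.testBit_lt_two_pow hx2, Nat.testBit_lt_two_pow hy2]
    have hmsb : x.msb = y.msb := hmin 0 (Nat.pos_of_ne_zero hk0)
    have hxi := BitVec.toInt_eq_msb_cond x
    have hyi := BitVec.toInt_eq_msb_cond y
    rw [← hmsb] at hyi
    cases hv : x.msb <;> rw [hv] at hxi hyi <;> simp at hxi hyi <;> omega
end

section
/- For bitvectors x, y of width n: x.toNat < y.toNat if and only if there exists k < n such that x.getMsbD j = y.getMsbD j for all j < k, x.getMsbD k = false, and y.getMsbD k = true. In other words, the unsigned order on bitvectors coincides with the lexicographic order on their bit sequences read from the most significant bit to the least significant bit. -/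
private lemma lsb_testBit {n : ℕ} (x : BitVec n) (i : ℕ) :
    x.toNat.testBit i = x.getLsbD i := rfl

theorem unsigned_lt_iff_lex_msb (n : ℕ) (x y : BitVec n) :
    x.toNat < y.toNat ↔
    ∃ k < n, (∀ j < k, x.getMsbD j = y.getMsbD j) ∧
      x.getMsbD k = false ∧ y.getMsbD k = true := by
  constructor
  · intro hlt
    have hne : x.toNat ≠ y.toNat := Nat.ne_of_lt hlt
    obtain ⟨i0, hi0⟩ := Nat.exists_testBit_ne_of_ne hne
    have hi0n : i0 ≤ n := by
      by_contra h
      have hx : x.toNat.testBit i0 = false :=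
        Nat.testBit_lt_two_pow (lt_of_lt_of_le x.isLt (Nat.pow_le_pow_right (by norm_num) (by omega)))
      have hy : y.toNat.testBit i0 = false :=
        Nat.testBit_lt_two_pow (lt_of_lt_of_le y.isLt (Nat.pow_le_pow_right (by norm_num) (by omega)))
      exact hi0 (hx.trans hy.symm)
    set P : ℕ → Prop := fun i => x.toNat.testBit i ≠ y.toNat.testBit i with hP
    set i := Nat.findGreatest P n with hi
    have hPi : P i := Nat.findGreatest_spec (P := P) hi0n hi0
    have hin : i < n := by
      rcases Nat.lt_or_ge i n with h | h
      · exact h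
      · exfalso
        have hx : x.toNat.testBit i = false :=
          Nat.testBit_lt_two_pow (lt_of_lt_of_le x.isLt (Nat.pow_le_pow_right (by norm_num) h))
        have hy : y.toNat.testBit i = false :=
          Nat.testBit_lt_two_pow (lt_of_lt_of_le y.isLt (Nat.pow_le_pow_right (by norm_num) h))
        exact hPi (hx.trans hy.symm)
    have habove : ∀ j, i < j → x.toNat.testBit j = y.toNat.testBit j := by
      intro j hj
      rcases Nat.lt_or_ge j n with h | h
      · by_contra hne'
        exact Nat.findGreatest_is_greatest (P := P) hj (le_of_lt h) hne'
      · have hx : x.toNat.testBit j = false :=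
          Nat.testBit_lt_two_pow (lt_of_lt_of_le x.isLt (Nat.pow_le_pow_right (by norm_num) h))
        have hy : y.toNat.testBit j = false :=
          Nat.testBit_lt_two_pow (lt_of_lt_of_le y.isLt (Nat.pow_le_pow_right (by norm_num) h))
        exact hx.trans hy.symm
    have hxi : x.toNat.testBit i = false ∧ y.toNat.testBit i = true := by
      rcases hx : x.toNat.testBit i with _ | _ <;> rcases hy : y.toNat.testBit i with _ | _
      · exact absurd (hx.trans hy.symm) hPi
      · exact ⟨rfl, rfl⟩
      · exfalso
        have : y.toNat < x.toNat :=
          Nat.lt_of_testBit i hy hx (fun j hj => (habove j hj).symm)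
        omega
      · exact absurd (hx.trans hy.symm) hPi
    refine ⟨n - 1 - i, by omega, ?_, ?_, ?_⟩
    · intro j hj
      rw [BitVec.getMsbD_eq_getLsbD, BitVec.getMsbD_eq_getLsbD, ← lsb_testBit, ← lsb_testBit,
        habove (n - 1 - j) (by omega)]
    · rw [BitVec.getMsbD_eq_getLsbD]
      have : n - 1 - (n - 1 - i) = i := by omega
      rw [this, ← lsb_testBit, hxi.1, Bool.and_false]
    · rw [BitVec.getMsbD_eq_getLsbD]
      have : n - 1 - (n - 1 - i) = i := by omega
      rw [this, ← lsb_testBit, hxi.2]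
      simp [show n - 1 - i < n by omega]
  · rintro ⟨k, hk, hagree, hxk, hyk⟩
    apply Nat.lt_of_testBit (n - 1 - k)
    · rw [lsb_testBit, BitVec.getLsbD_eq_getMsbD]
      have : n - 1 - (n - 1 - k) = k := by omega
      rw [this, hxk, Bool.and_false]
    · rw [lsb_testBit, BitVec.getLsbD_eq_getMsbD]
      have : n - 1 - (n - 1 - k) = k := by omega
      rw [this, hyk]
      simp [show n - 1 - k < n by omega]
    · intro j hj
      rcases Nat.lt_or_ge j n with h | h
      · rw [lsb_testBit, lsb_testBit, BitVec.getLsbD_eq_getMsbD, BitVec.getLsbD_eq_getMsbD,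
          hagree (n - 1 - j) (by omega)]
      · have hx : x.toNat.testBit j = false :=
          Nat.testBit_lt_two_pow (lt_of_lt_of_le x.isLt (Nat.pow_le_pow_right (by norm_num) h))
        have hy : y.toNat.testBit j = false :=
          Nat.testBit_lt_two_pow (lt_of_lt_of_le y.isLt (Nat.pow_le_pow_right (by norm_num) h))
        exact hx.trans hy.symm
end

section
/- Fix E ≥ 2 and S ≥ 2 and consider FP patterns of sort (E,S). For all non-NaN patterns x, y with sgn x = false and sgn y = false: if e x < e y then val x < val y, regardless of the significand fields m x and m y. -/
/-- The sign bit of an FP pattern of sort (E,S): the most significant bit. -/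
def FP.sgn (E S : ℕ) (x : BitVec (E + S)) : Bool := x.getMsbD 0

/-- The exponent field of an FP pattern of sort (E,S). -/
def FP.efield (E S : ℕ) (x : BitVec (E + S)) : ℕ := (x.toNat / 2 ^ (S - 1)) % 2 ^ E

/-- The significand field of an FP pattern of sort (E,S). -/
def FP.mfield (E S : ℕ) (x : BitVec (E + S)) : ℕ := x.toNat % 2 ^ (S - 1)

/-- The exponent bias of sort (E,S). -/
def FP.bias (E : ℕ) : ℤ := 2 ^ (E - 1) - 1

/-- An FP pattern is NaN iff its exponent field is all-ones and its significand is nonzero. -/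
def FP.isNaN (E S : ℕ) (x : BitVec (E + S)) : Prop :=
  FP.efield E S x = 2 ^ E - 1 ∧ FP.mfield E S x ≠ 0

/-- The IEEE 754 value of a (non-NaN) FP pattern of sort (E,S), as an extended real. -/
noncomputable def FP.val (E S : ℕ) (x : BitVec (E + S)) : EReal :=
  if FP.efield E S x = 2 ^ E - 1 then
    (if FP.sgn E S x then (⊥ : EReal) else (⊤ : EReal))
  else if FP.efield E S x = 0 then
    (((if FP.sgn E S x then (-1 : ℝ) else 1) * 2 ^ ((1 : ℤ) - FP.bias E) *
        ((FP.mfield E S x : ℝ) / 2 ^ (S - 1)) : ℝ) : EReal)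
  else
    (((if FP.sgn E S x then (-1 : ℝ) else 1) * 2 ^ ((FP.efield E S x : ℤ) - FP.bias E) *
        (1 + (FP.mfield E S x : ℝ) / 2 ^ (S - 1)) : ℝ) : EReal)

theorem fp_pos_exponent_monotone (E S : ℕ) (hE : 2 ≤ E) (hS : 2 ≤ S)
    (x y : BitVec (E + S)) (hx : ¬ FP.isNaN E S x) (hy : ¬ FP.isNaN E S y)
    (hsx : FP.sgn E S x = false) (hsy : FP.sgn E S y = false)
    (he : FP.efield E S x < FP.efield E S y) :
    FP.val E S x < FP.val E S y := by
  have hpow : (0:ℝ) < 2 ^ (S - 1) := by positivity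
  have hm : ∀ z : BitVec (E + S), (FP.mfield E S z : ℝ) / 2 ^ (S - 1) < 1 := by
    intro z
    rw [div_lt_one hpow]
    have : FP.mfield E S z < 2 ^ (S - 1) := Nat.mod_lt _ (by positivity)
    exact_mod_cast this
  have hm0 : ∀ z : BitVec (E + S), (0:ℝ) ≤ (FP.mfield E S z : ℝ) / 2 ^ (S - 1) := by
    intro z; positivity
  unfold FP.val
  rw [hsx, hsy]
  simp only [if_false, Bool.false_eq_true, one_mul]
  by_cases hyc : FP.efield E S y = 2 ^ E - 1
  · have hxe : FP.efield E S x ≠ 2 ^ E - 1 := by omega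
    rw [if_neg hxe, if_pos hyc]
    split <;> exact EReal.coe_lt_top _
  · have hEpos : (0:ℕ) < 2 ^ E := by positivity
    have hb : FP.efield E S y < 2 ^ E := Nat.mod_lt _ hEpos
    have hlink : 2 ^ E - 1 + 1 = 2 ^ E := Nat.succ_pred_eq_of_pos hEpos
    have hxe : FP.efield E S x ≠ 2 ^ E - 1 := by omega
    have hy0 : FP.efield E S y ≠ 0 := by omega
    rw [if_neg hxe, if_neg hyc, if_neg hy0]
    have key : ∀ a b : ℤ, a + 1 ≤ b →
        (2:ℝ) ^ a * (1 + (FP.mfield E S x : ℝ) / 2 ^ (S - 1)) <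
        (2:ℝ) ^ b * (1 + (FP.mfield E S y : ℝ) / 2 ^ (S - 1)) := by
      intro a b hab
      have h1 : (2:ℝ) ^ a * (1 + (FP.mfield E S x : ℝ) / 2 ^ (S - 1)) <
          (2:ℝ) ^ a * 2 := by
        have := hm x
        have hpa : (0:ℝ) < (2:ℝ) ^ a := by positivity
        nlinarith
      have h2 : (2:ℝ) ^ a * 2 = (2:ℝ) ^ (a + 1) := by
        rw [zpow_add_one₀ (by norm_num)]
      have h3 : (2:ℝ) ^ (a + 1) ≤ (2:ℝ) ^ b :=
        zpow_le_zpow_right₀ (by norm_num) hab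
      have h4 : (2:ℝ) ^ b ≤ (2:ℝ) ^ b * (1 + (FP.mfield E S y : ℝ) / 2 ^ (S - 1)) := by
        have := hm0 y
        have hpb : (0:ℝ) < (2:ℝ) ^ b := by positivity
        nlinarith
      linarith [h1, h2 ▸ h3]
    by_cases hx0 : FP.efield E S x = 0
    · rw [if_pos hx0]
      rw [EReal.coe_lt_coe_iff]
      have hsub : (2:ℝ) ^ ((1:ℤ) - FP.bias E) * ((FP.mfield E S x : ℝ) / 2 ^ (S - 1)) <
          (2:ℝ) ^ ((1:ℤ) - FP.bias E) * (1 + (FP.mfield E S x : ℝ) / 2 ^ (S - 1)) := by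
        have hpa : (0:ℝ) < (2:ℝ) ^ ((1:ℤ) - FP.bias E) := by positivity
        nlinarith
      refine lt_of_lt_of_le (b := (2:ℝ) ^ ((1:ℤ) - FP.bias E) * 1) ?_ ?_
      · exact mul_lt_mul_of_pos_left (hm x) (by positivity)
      · have h3 : (2:ℝ) ^ ((1:ℤ) - FP.bias E) ≤ (2:ℝ) ^ ((FP.efield E S y : ℤ) - FP.bias E) := by
          apply zpow_le_zpow_right₀ (by norm_num)
          have : (1:ℤ) ≤ (FP.efield E S y : ℤ) := by exact_mod_cast Nat.one_le_iff_ne_zero.2 hy0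
          omega
        have h4 : (2:ℝ) ^ ((FP.efield E S y : ℤ) - FP.bias E) ≤
            (2:ℝ) ^ ((FP.efield E S y : ℤ) - FP.bias E) * (1 + (FP.mfield E S y : ℝ) / 2 ^ (S - 1)) := by
          have := hm0 y
          have hpb : (0:ℝ) < (2:ℝ) ^ ((FP.efield E S y : ℤ) - FP.bias E) := by positivity
          nlinarith
        calc (2:ℝ) ^ ((1:ℤ) - FP.bias E) * 1 = (2:ℝ) ^ ((1:ℤ) - FP.bias E) := mul_one _
          _ ≤ _ := h3.trans h4
    · rw [if_neg hx0]
      rw [EReal.coe_lt_coe_iff]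
      apply key
      have : (FP.efield E S x : ℤ) < (FP.efield E S y : ℤ) := by exact_mod_cast he
      omega
end

section
/- Fix E ≥ 2 and S ≥ 2 and consider FP patterns of sort (E,S). For all non-NaN patterns x, y with sgn x = true, sgn y = true, and e x = e y < 2^E - 1: if m x < m y then val x > val y. -/
theorem fp_neg_significand_antitone (E S : ℕ) (hE : 2 ≤ E) (hS : 2 ≤ S)
    (x y : BitVec (E + S)) (hx : ¬ FP.isNaN E S x) (hy : ¬ FP.isNaN E S y)
    (hsx : FP.sgn E S x = true) (hsy : FP.sgn E S y = true)
    (he : FP.efield E S x = FP.efield E S y)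
    (helt : FP.efield E S x < 2 ^ E - 1)
    (hm : FP.mfield E S x < FP.mfield E S y) :
    FP.val E S x > FP.val E S y := by
  have hne : FP.efield E S x ≠ 2 ^ E - 1 := ne_of_lt helt
  have hney : FP.efield E S y ≠ 2 ^ E - 1 := he ▸ hne
  have hmlt : (FP.mfield E S x : ℝ) / 2 ^ (S - 1) < (FP.mfield E S y : ℝ) / 2 ^ (S - 1) := by
    gcongr
    all_goals exact_mod_cast hm
  unfold FP.val
  rw [hsx, hsy, if_neg hne, if_neg hney, ← he]
  by_cases h0 : FP.efield E S x = 0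
  · rw [if_pos h0, if_pos h0]
    simp only [reduceIte, gt_iff_lt, EReal.coe_lt_coe_iff]
    have hp : (0:ℝ) < 2 ^ ((1 : ℤ) - FP.bias E) := by positivity
    nlinarith [hmlt, hp]
  · rw [if_neg h0, if_neg h0]
    simp only [reduceIte, gt_iff_lt, EReal.coe_lt_coe_iff]
    have hp : (0:ℝ) < 2 ^ ((FP.efield E S x : ℤ) - FP.bias E) := by positivity
    nlinarith [hmlt, hp]
end

section
/- Fix E ≥ 2 and S ≥ 2 and consider FP patterns of sort (E,S). For all non-NaN patterns x, y with sgn x = false and sgn y = false: val x < val y if and only if x.toNat < y.toNat. That is, on non-NaN patterns with sign bit 0, the IEEE 754 value is a strictly increasing function of the pattern's unsigned integer encoding. -/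
def FP.N (E S : ℕ) (x : BitVec (E + S)) : ℕ :=
  if FP.efield E S x = 0 then FP.mfield E S x
  else 2 ^ (FP.efield E S x - 1) * (2 ^ (S - 1) + FP.mfield E S x)

lemma FP.toNat_lt (E S : ℕ) (hE : 1 ≤ E) (hS : 1 ≤ S) (x : BitVec (E + S))
    (hsx : FP.sgn E S x = false) : x.toNat < 2 ^ (E + S - 1) := by
  rw [FP.sgn, BitVec.getMsbD, BitVec.getLsbD] at hsx
  have hpos : 0 < E + S := by omega
  simp only [hpos, decide_true, Bool.true_and, Nat.sub_zero, decide_eq_false_iff_not] at hsx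
  rw [Nat.testBit_eq_decide_div_mod_eq, decide_eq_false_iff_not] at hsx
  have h1 := x.isLt
  have h2 : 2 ^ (E + S) = 2 * 2 ^ (E + S - 1) := by
    rw [← pow_succ']; congr 1; omega
  have hP : 0 < 2 ^ (E + S - 1) := Nat.pow_pos (by norm_num)
  have hd : x.toNat / 2 ^ (E + S - 1) < 2 := Nat.div_lt_of_lt_mul (by omega)
  rw [Nat.mod_eq_of_lt hd] at hsx
  have hd0 : x.toNat / 2 ^ (E + S - 1) = 0 :=
    Nat.lt_one_iff.mp (lt_of_le_of_ne (Nat.lt_succ_iff.mp hd) hsx)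
  exact (Nat.div_eq_zero_iff_lt hP).mp hd0

lemma FP.efield_eq (E S : ℕ) (hE : 1 ≤ E) (hS : 1 ≤ S) (x : BitVec (E + S))
    (hsx : FP.sgn E S x = false) : FP.efield E S x = x.toNat / 2 ^ (S - 1) := by
  rw [FP.efield, Nat.mod_eq_of_lt]
  rw [Nat.div_lt_iff_lt_mul (Nat.pow_pos (by norm_num)), ← pow_add]
  have := FP.toNat_lt E S hE hS x hsx
  have h : E + (S - 1) = E + S - 1 := by omega
  rw [h]; exact this

lemma FP.decomp (E S : ℕ) (hE : 1 ≤ E) (hS : 1 ≤ S) (x : BitVec (E + S))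
    (hsx : FP.sgn E S x = false) :
    x.toNat = FP.efield E S x * 2 ^ (S - 1) + FP.mfield E S x := by
  rw [FP.efield_eq E S hE hS x hsx, FP.mfield]
  exact (Nat.div_add_mod' _ _).symm

lemma FP.mfield_lt (E S : ℕ) (x : BitVec (E + S)) : FP.mfield E S x < 2 ^ (S - 1) :=
  Nat.mod_lt _ (Nat.pow_pos (by norm_num))

lemma FP.val_eq (E S : ℕ) (hE : 1 ≤ E) (hS : 1 ≤ S) (x : BitVec (E + S))
    (hsx : FP.sgn E S x = false) (he : FP.efield E S x ≠ 2 ^ E - 1) :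
    FP.val E S x = (((FP.N E S x : ℝ) * (2 : ℝ) ^ ((2 : ℤ) - FP.bias E - S) : ℝ) : EReal) := by
  have hP : ((2 : ℝ) ^ (S - 1) : ℝ) = (2 : ℝ) ^ ((S : ℤ) - 1) := by
    rw [← zpow_natCast]; congr 1; omega
  have hPne : ((2:ℝ) ^ ((S:ℤ) - 1)) ≠ 0 := by positivity
  rw [FP.val, FP.N, if_neg he, hsx]
  by_cases h0 : FP.efield E S x = 0
  · rw [if_pos h0, if_pos h0]
    simp only [Bool.false_eq_true, if_false]
    congr 1
    rw [hP]
    have key : (2:ℝ) ^ ((1:ℤ) - FP.bias E) = 2 ^ ((2:ℤ) - FP.bias E - S) * 2 ^ ((S:ℤ) - 1) := by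
      rw [← zpow_add₀ (by norm_num : (2:ℝ) ≠ 0)]; congr 1; ring
    rw [key]
    field_simp
  · rw [if_neg h0, if_neg h0]
    simp only [Bool.false_eq_true, if_false]
    congr 1
    push_cast
    rw [hP]
    have he1 : ((2:ℝ) ^ (FP.efield E S x - 1) : ℝ) = (2:ℝ) ^ ((FP.efield E S x : ℤ) - 1) := by
      rw [← zpow_natCast]; congr 1; omega
    rw [he1]
    have key : (2:ℝ) ^ ((FP.efield E S x : ℤ) - FP.bias E)
        = 2 ^ ((FP.efield E S x : ℤ) - 1) * 2 ^ ((2:ℤ) - FP.bias E - S) * 2 ^ ((S:ℤ) - 1) := by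
      rw [← zpow_add₀ (by norm_num : (2:ℝ) ≠ 0), ← zpow_add₀ (by norm_num : (2:ℝ) ≠ 0)]
      congr 1; ring
    rw [key]
    field_simp

lemma FP.N_lt (E S : ℕ) (hE : 1 ≤ E) (hS : 1 ≤ S) (x y : BitVec (E + S))
    (hsx : FP.sgn E S x = false) (hsy : FP.sgn E S y = false)
    (h : x.toNat < y.toNat) : FP.N E S x < FP.N E S y := by
  have d1 := FP.decomp E S hE hS x hsx
  have d2 := FP.decomp E S hE hS y hsy
  have hm1 := FP.mfield_lt E S x
  have hm2 := FP.mfield_lt E S y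
  have hPpos : 0 < 2 ^ (S - 1) := Nat.pow_pos (by norm_num)
  have hee : FP.efield E S x ≤ FP.efield E S y := by
    rw [FP.efield_eq E S hE hS x hsx, FP.efield_eq E S hE hS y hsy]
    exact Nat.div_le_div_right h.le
  rcases eq_or_lt_of_le hee with heq | hlt
  · rw [d1, d2, heq] at h
    have hm : FP.mfield E S x < FP.mfield E S y := Nat.lt_of_add_lt_add_left h
    rw [FP.N, FP.N, heq]
    by_cases h0 : FP.efield E S y = 0
    · rw [if_pos h0, if_pos h0]; exact hm
    · rw [if_neg h0, if_neg h0]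
      exact Nat.mul_lt_mul_of_pos_left (Nat.add_lt_add_left hm _)
        (Nat.pow_pos (by norm_num))
  · have he2 : FP.efield E S y ≠ 0 := by omega
    have step1 : FP.N E S x < 2 ^ FP.efield E S x * 2 ^ (S - 1) := by
      rw [FP.N]
      by_cases h0 : FP.efield E S x = 0
      · rw [if_pos h0, h0, pow_zero, one_mul]; exact hm1
      · rw [if_neg h0]
        calc 2 ^ (FP.efield E S x - 1) * (2 ^ (S - 1) + FP.mfield E S x)
            < 2 ^ (FP.efield E S x - 1) * (2 ^ (S - 1) + 2 ^ (S - 1)) := by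
              exact Nat.mul_lt_mul_of_pos_left (Nat.add_lt_add_left hm1 _)
                (Nat.pow_pos (by norm_num))
          _ = 2 ^ (FP.efield E S x - 1 + 1) * 2 ^ (S - 1) := by ring
          _ = 2 ^ FP.efield E S x * 2 ^ (S - 1) := by congr 2; omega
    have step2 : 2 ^ FP.efield E S x * 2 ^ (S - 1) ≤ FP.N E S y := by
      rw [FP.N, if_neg he2]
      calc 2 ^ FP.efield E S x * 2 ^ (S - 1)
          ≤ 2 ^ (FP.efield E S y - 1) * 2 ^ (S - 1) :=
            Nat.mul_le_mul_right _ (Nat.pow_le_pow_right (by norm_num) (by omega))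
        _ ≤ 2 ^ (FP.efield E S y - 1) * (2 ^ (S - 1) + FP.mfield E S y) :=
            Nat.mul_le_mul_left _ (by omega)
    omega

lemma FP.val_lt (E S : ℕ) (hE : 1 ≤ E) (hS : 1 ≤ S) (x y : BitVec (E + S))
    (hx : ¬ FP.isNaN E S x) (hy : ¬ FP.isNaN E S y)
    (hsx : FP.sgn E S x = false) (hsy : FP.sgn E S y = false)
    (h : x.toNat < y.toNat) : FP.val E S x < FP.val E S y := by
  by_cases hey : FP.efield E S y = 2 ^ E - 1
  · have hm2 : FP.mfield E S y = 0 := by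
      by_contra hc; exact hy ⟨hey, hc⟩
    have hex : FP.efield E S x ≠ 2 ^ E - 1 := by
      intro hex
      have hm1 : FP.mfield E S x = 0 := by
        by_contra hc; exact hx ⟨hex, hc⟩
      rw [FP.decomp E S hE hS x hsx, FP.decomp E S hE hS y hsy, hex, hey, hm1, hm2] at h
      exact absurd h (lt_irrefl _)
    have hvy : FP.val E S y = ⊤ := by
      rw [FP.val, if_pos hey, hsy]; simp
    rw [hvy, FP.val_eq E S hE hS x hsx hex]
    exact EReal.coe_lt_top _
  · have hex : FP.efield E S x ≠ 2 ^ E - 1 := by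
      intro hex
      have hee : FP.efield E S x ≤ FP.efield E S y := by
        rw [FP.efield_eq E S hE hS x hsx, FP.efield_eq E S hE hS y hsy]
        exact Nat.div_le_div_right h.le
      have h1 : FP.efield E S y < 2 ^ E := Nat.mod_lt _ (Nat.pow_pos (by norm_num))
      omega
    rw [FP.val_eq E S hE hS x hsx hex, FP.val_eq E S hE hS y hsy hey]
    rw [EReal.coe_lt_coe_iff]
    apply mul_lt_mul_of_pos_right _ (by positivity)
    exact_mod_cast FP.N_lt E S hE hS x y hsx hsy h

theorem fp_pos_val_lt_iff_toNat_lt (E S : ℕ) (hE : 2 ≤ E) (hS : 2 ≤ S)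
    (x y : BitVec (E + S)) (hx : ¬ FP.isNaN E S x) (hy : ¬ FP.isNaN E S y)
    (hsx : FP.sgn E S x = false) (hsy : FP.sgn E S y = false) :
    FP.val E S x < FP.val E S y ↔ x.toNat < y.toNat := by
  have hE1 : 1 ≤ E := by omega
  have hS1 : 1 ≤ S := by omega
  constructor
  · intro hlt
    by_contra hge
    push_neg at hge
    rcases eq_or_lt_of_le hge with heq | hlt'
    · have : x = y := BitVec.toNat_injective heq.symm
      rw [this] at hlt
      exact absurd hlt (lt_irrefl _)
    · exact absurd hlt (not_lt_of_gt (FP.val_lt E S hE1 hS1 y x hy hx hsy hsx hlt'))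
  · exact FP.val_lt E S hE1 hS1 x y hx hy hsx hsy
end

section
/- Fix E ≥ 2 and S ≥ 2 and consider FP patterns of sort (E,S). For all non-NaN patterns x, y with sgn x = true and sgn y = true: val x < val y if and only if x.toNat > y.toNat. That is, on non-NaN patterns with sign bit 1, the IEEE 754 value is a strictly decreasing function of the pattern's unsigned integer encoding. -/
namespace FPAux

noncomputable def g (E S : ℕ) (e m : ℕ) : ℝ :=
  if e = 0 then (2:ℝ) ^ ((1:ℤ) - FP.bias E) * ((m : ℝ) / 2 ^ (S - 1))
  else (2:ℝ) ^ ((e:ℤ) - FP.bias E) * (1 + (m : ℝ) / 2 ^ (S - 1))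

noncomputable def f (E S n : ℕ) : ℝ := g E S (n / 2 ^ (S-1)) (n % 2 ^ (S-1))

lemma g_lt_same (E S : ℕ) (e m m' : ℕ) (h : m < m') : g E S e m < g E S e m' := by
  have h2 : (0:ℝ) < 2 ^ (S-1) := by positivity
  have hmm : (m:ℝ) / 2^(S-1) < (m':ℝ) / 2^(S-1) := by
    gcongr <;> exact_mod_cast h
  unfold g
  split
  · exact mul_lt_mul_of_pos_left hmm (by positivity)
  · exact mul_lt_mul_of_pos_left (by linarith) (by positivity)

lemma g_rollover (E S : ℕ) (e : ℕ) : g E S e (2^(S-1) - 1) < g E S (e+1) 0 := by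
  have h2 : (0:ℝ) < 2 ^ (S-1) := by positivity
  have h1 : (1:ℕ) ≤ 2^(S-1) := Nat.one_le_two_pow
  have hc : ((2^(S-1) - 1 : ℕ) : ℝ) = 2^(S-1) - 1 := by push_cast [h1]; ring
  have key : ((2^(S-1) - 1 : ℕ) : ℝ) / 2^(S-1) < 1 := by
    rw [hc, div_lt_one h2]; linarith
  unfold g
  rcases Nat.eq_zero_or_pos e with he | he
  · subst he
    norm_num
    have hp : (0:ℝ) < (2:ℝ) ^ ((1:ℤ) - FP.bias E) := by positivity
    have key2 : ((2:ℝ)^(S-1) - 1)/2^(S-1) < 1 := by rw [div_lt_one h2]; linarith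
    nlinarith [mul_lt_mul_of_pos_left key2 hp]
  · rw [if_neg (by omega), if_neg (by omega)]
    have hz : ((e+1 : ℕ) : ℤ) - FP.bias E = ((e:ℤ) - FP.bias E) + 1 := by push_cast; ring
    have hp : (0:ℝ) < (2:ℝ) ^ ((e:ℤ) - FP.bias E) := by positivity
    rw [hz, zpow_add_one₀ (by norm_num)]
    have : (1:ℝ) + ((2^(S-1)-1 : ℕ):ℝ)/2^(S-1) < 2 := by linarith
    calc (2:ℝ) ^ ((e:ℤ) - FP.bias E) * (1 + ((2^(S-1)-1 : ℕ):ℝ)/2^(S-1))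
        < 2 ^ ((e:ℤ) - FP.bias E) * 2 := mul_lt_mul_of_pos_left this hp
      _ ≤ _ := le_of_eq (by push_cast; ring)

lemma f_step (E S n : ℕ) : f E S n < f E S (n+1) := by
  have h2 : (0:ℕ) < 2 ^ (S-1) := Nat.pow_pos (by norm_num)
  have hdm := Nat.div_add_mod n (2^(S-1))
  set q := n / 2^(S-1) with hq
  set r := n % 2^(S-1) with hr
  have hrlt : r < 2^(S-1) := Nat.mod_lt _ h2
  rcases Nat.lt_or_ge (r+1) (2^(S-1)) with h | h
  · have hd : (n+1) / 2^(S-1) = q := by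
      rw [show n + 1 = 2^(S-1)*q + (r+1) by omega, Nat.mul_add_div h2, Nat.div_eq_of_lt h]
      omega
    have hm : (n+1) % 2^(S-1) = r + 1 := by
      rw [show n + 1 = 2^(S-1)*q + (r+1) by omega, Nat.mul_add_mod, Nat.mod_eq_of_lt h]
    unfold f
    rw [hd, hm, ← hq, ← hr]
    exact g_lt_same E S q r (r+1) (Nat.lt_succ_self r)
  · have hre : r = 2^(S-1) - 1 := by omega
    have hmul : 2^(S-1)*(q+1) = 2^(S-1)*q + 2^(S-1) := by ring
    have hd : (n+1) / 2^(S-1) = q + 1 := by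
      rw [show n + 1 = 2^(S-1)*(q+1) by omega, Nat.mul_div_cancel_left _ h2]
    have hm : (n+1) % 2^(S-1) = 0 := by
      rw [show n + 1 = 2^(S-1)*(q+1) by omega, Nat.mul_mod_right]
    unfold f
    rw [hd, hm, ← hq, ← hr, hre]
    exact g_rollover E S q

lemma f_mono (E S : ℕ) : StrictMono (f E S) := strictMono_nat_of_lt_succ (f_step E S)

lemma sgn_le (E S : ℕ) (hE : 1 ≤ E) (x : BitVec (E+S)) (hs : FP.sgn E S x = true) :
    2^(E+S-1) ≤ x.toNat := by
  have hpos : 0 < E + S := by omega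
  rw [FP.sgn, BitVec.getMsbD, BitVec.getLsbD, Nat.testBit_eq_decide_div_mod_eq] at hs
  simp [hpos] at hs
  have h2 : 1 ≤ x.toNat / 2^(E+S-1) := by
    by_contra h
    have h0 : x.toNat / 2^(E+S-1) = 0 := Nat.lt_one_iff.mp (Nat.not_le.mp h)
    rw [h0] at hs
    simp at hs
  exact (Nat.one_le_div_iff (by positivity)).mp h2

lemma fields (E S : ℕ) (hE : 1 ≤ E) (hS : 1 ≤ S) (x : BitVec (E+S)) (hs : FP.sgn E S x = true) :
    FP.efield E S x = (x.toNat - 2^(E+S-1)) / 2^(S-1) ∧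
    FP.mfield E S x = (x.toNat - 2^(E+S-1)) % 2^(S-1) ∧
    2^(E+S-1) ≤ x.toNat ∧ x.toNat - 2^(E+S-1) < 2^(E+S-1) := by
  have hle : 2^(E+S-1) ≤ x.toNat := sgn_le E S hE x hs
  have hsplit : (2:ℕ)^(E+S-1) = 2^(S-1) * 2^E := by
    rw [← pow_add]; congr 1; omega
  have h2 : (0:ℕ) < 2 ^ (S-1) := Nat.pow_pos (by norm_num)
  set n := x.toNat - 2^(E+S-1) with hn
  have hxeq : x.toNat = 2^(S-1) * 2^E + n := by rw [← hsplit]; omega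
  have hnlt : n < 2^(E+S-1) := by
    have h := x.isLt
    have hp : (2:ℕ)^(E+S) = 2^(E+S-1)*2 := by rw [← pow_succ]; congr 1; omega
    omega
  have hnlt' : n < 2^(S-1) * 2^E := hsplit ▸ hnlt
  have hdiv : x.toNat / 2^(S-1) = 2^E + n / 2^(S-1) := by
    rw [hxeq, Nat.mul_add_div h2]
  have hdlt : n / 2^(S-1) < 2^E := Nat.div_lt_of_lt_mul (by omega)
  refine ⟨?_, ?_, hle, hnlt⟩
  · rw [FP.efield, hdiv, Nat.add_mod_left, Nat.mod_eq_of_lt hdlt]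
  · rw [FP.mfield, hxeq, Nat.mul_add_mod]

lemma val_neg (E S : ℕ) (hE : 1 ≤ E) (hS : 1 ≤ S) (x : BitVec (E+S))
    (hs : FP.sgn E S x = true) (hne : FP.efield E S x ≠ 2^E - 1) :
    FP.val E S x = ((-(f E S (x.toNat - 2^(E+S-1))) : ℝ) : EReal) := by
  obtain ⟨he, hm, -, -⟩ := fields E S hE hS x hs
  rw [FP.val, if_neg hne, hs]
  rw [f, g, ← he, ← hm]
  split
  · simp only [if_pos ‹_›]; norm_num
  · simp only [if_neg ‹_›]; norm_num

end FPAux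

theorem fp_neg_val_lt_iff_toNat_gt (E S : ℕ) (hE : 2 ≤ E) (hS : 2 ≤ S)
    (x y : BitVec (E + S)) (hx : ¬ FP.isNaN E S x) (hy : ¬ FP.isNaN E S y)
    (hsx : FP.sgn E S x = true) (hsy : FP.sgn E S y = true) :
    FP.val E S x < FP.val E S y ↔ y.toNat < x.toNat := by
  have hE1 : 1 ≤ E := by omega
  have hS1 : 1 ≤ S := by omega
  have h2 : (0:ℕ) < 2 ^ (S-1) := Nat.pow_pos (by norm_num)
  have h2E : (1:ℕ) ≤ 2 ^ E := Nat.one_le_two_pow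
  obtain ⟨hex, hmx, hlex, hltx⟩ := FPAux.fields E S hE1 hS1 x hsx
  obtain ⟨hey, hmy, hley, hlty⟩ := FPAux.fields E S hE1 hS1 y hsy
  set nx := x.toNat - 2^(E+S-1) with hnx
  set ny := y.toNat - 2^(E+S-1) with hny
  have hRHS : (y.toNat < x.toNat) ↔ ny < nx := by omega
  rw [hRHS]
  have hsplit : (2:ℕ)^(E+S-1) = 2^(S-1) * 2^E := by rw [← pow_add]; congr 1; omega
  -- top encoding
  have topx : FP.efield E S x = 2^E - 1 → nx = 2^(S-1) * (2^E - 1) := by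
    intro h
    have hm0 : FP.mfield E S x = 0 := by
      by_contra hc; exact hx ⟨h, hc⟩
    have hdm := Nat.div_add_mod nx (2^(S-1))
    rw [← hex, ← hmx, h, hm0] at hdm
    omega
  have topy : FP.efield E S y = 2^E - 1 → ny = 2^(S-1) * (2^E - 1) := by
    intro h
    have hm0 : FP.mfield E S y = 0 := by
      by_contra hc; exact hy ⟨h, hc⟩
    have hdm := Nat.div_add_mod ny (2^(S-1))
    rw [← hey, ← hmy, h, hm0] at hdm
    omega
  have lowx : FP.efield E S x ≠ 2^E - 1 → nx < 2^(S-1) * (2^E - 1) := by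
    intro h
    have hd : nx / 2^(S-1) < 2^E := Nat.div_lt_of_lt_mul (by omega)
    have hd2 : nx / 2^(S-1) < 2^E - 1 := by rw [← hex] at hd ⊢; omega
    calc nx < 2^(S-1) * (nx / 2^(S-1)) + 2^(S-1) := by
          have := Nat.div_add_mod nx (2^(S-1)); have := Nat.mod_lt nx h2; omega
      _ ≤ 2^(S-1) * (2^E - 1) := by nlinarith
  have lowy : FP.efield E S y ≠ 2^E - 1 → ny < 2^(S-1) * (2^E - 1) := by
    intro h
    have hd : ny / 2^(S-1) < 2^E := Nat.div_lt_of_lt_mul (by omega)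
    have hd2 : ny / 2^(S-1) < 2^E - 1 := by rw [← hey] at hd ⊢; omega
    calc ny < 2^(S-1) * (ny / 2^(S-1)) + 2^(S-1) := by
          have := Nat.div_add_mod ny (2^(S-1)); have := Nat.mod_lt ny h2; omega
      _ ≤ 2^(S-1) * (2^E - 1) := by nlinarith
  by_cases hxe : FP.efield E S x = 2^E - 1
  · have hvx : FP.val E S x = ⊥ := by rw [FP.val, if_pos hxe, hsx]; rfl
    by_cases hye : FP.efield E S y = 2^E - 1
    · have hvy : FP.val E S y = ⊥ := by rw [FP.val, if_pos hye, hsy]; rfl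
      rw [hvx, hvy]
      simp [topx hxe, topy hye]
    · rw [hvx, FPAux.val_neg E S hE1 hS1 y hsy hye]
      simp only [EReal.bot_lt_coe, true_iff]
      have := lowy hye
      have := topx hxe
      omega
  · by_cases hye : FP.efield E S y = 2^E - 1
    · have hvy : FP.val E S y = ⊥ := by rw [FP.val, if_pos hye, hsy]; rfl
      rw [hvy, FPAux.val_neg E S hE1 hS1 x hsx hxe]
      simp only [not_lt_bot, false_iff, not_lt]
      have := lowx hxe
      have := topy hye
      omega
    · rw [FPAux.val_neg E S hE1 hS1 x hsx hxe, FPAux.val_neg E S hE1 hS1 y hsy hye,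
        EReal.coe_lt_coe_iff, neg_lt_neg_iff]
      exact (FPAux.f_mono E S).lt_iff_lt
end

section
/- (Lemma 1 of the paper, minimization case.) Fix E ≥ 2 and S ≥ 2, let n := E + S, and let k < n. Let z be a non-NaN FP pattern of sort (E,S) that is a dynamic attractor for its own k-bit prefix, i.e., val z ≤ val w for every non-NaN pattern w with w.getMsbD j = z.getMsbD j for all j < k. Then for all non-NaN patterns x, y with x.getMsbD j = z.getMsbD j and y.getMsbD j = z.getMsbD j for all j < k, x.getMsbD k = z.getMsbD k, and y.getMsbD k = ¬(z.getMsbD k), we have val x ≤ val y. -/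
namespace FPaux

/-- magnitude value -/
noncomputable def pval (E S : ℕ) (e m : ℕ) : EReal :=
  if e = 2 ^ E - 1 then ⊤
  else if e = 0 then
    (((2 : ℝ) ^ ((1 : ℤ) - FP.bias E) * ((m : ℝ) / 2 ^ (S - 1)) : ℝ) : EReal)
  else
    (((2 : ℝ) ^ ((e : ℤ) - FP.bias E) * (1 + (m : ℝ) / 2 ^ (S - 1)) : ℝ) : EReal)

lemma pval_nonneg (E S e m : ℕ) : 0 ≤ pval E S e m := by
  unfold pval
  split_ifs
  · exact le_top
  · exact EReal.coe_nonneg.mpr (by positivity)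
  · exact EReal.coe_nonneg.mpr (by positivity)

lemma pval_ne_bot (E S e m : ℕ) : pval E S e m ≠ ⊥ := by
  unfold pval; split_ifs
  · exact top_ne_bot
  · exact EReal.coe_ne_bot _
  · exact EReal.coe_ne_bot _

lemma val_eq_pval {E S : ℕ} {x : BitVec (E + S)} (h : FP.sgn E S x = false) :
    FP.val E S x = pval E S (FP.efield E S x) (FP.mfield E S x) := by
  unfold FP.val pval
  rw [h]
  simp

lemma val_eq_neg_pval {E S : ℕ} {x : BitVec (E + S)} (h : FP.sgn E S x = true) :
    FP.val E S x = -pval E S (FP.efield E S x) (FP.mfield E S x) := by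
  unfold FP.val pval
  rw [h]
  simp only [if_true]
  split_ifs with h1 h2
  · simp
  · rw [← EReal.coe_neg]; norm_num
  · rw [← EReal.coe_neg]; norm_num

lemma pval_lt {E S : ℕ} (e1 m1 e2 m2 : ℕ)
    (hm1 : m1 < 2 ^ (S - 1)) (hm2 : m2 < 2 ^ (S - 1))
    (hn2 : e2 = 2 ^ E - 1 → m2 = 0)
    (he2 : e2 < 2 ^ E)
    (hlex : e1 < e2 ∨ (e1 = e2 ∧ m1 < m2)) :
    pval E S e1 m1 < pval E S e2 m2 := by
  have hP : (0:ℝ) < 2 ^ (S - 1) := by positivity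
  have hm1' : (m1 : ℝ) / 2 ^ (S - 1) < 1 := (div_lt_one hP).mpr (by exact_mod_cast hm1)
  have hm1'' : (0:ℝ) ≤ (m1 : ℝ) / 2 ^ (S - 1) := by positivity
  have hm2'' : (0:ℝ) ≤ (m2 : ℝ) / 2 ^ (S - 1) := by positivity
  have hne1 : e1 ≠ 2 ^ E - 1 := by
    rcases hlex with h | ⟨rfl, h⟩
    · omega
    · intro hh; have := hn2 hh; omega
  rcases hlex with hlt | ⟨rfl, hmm⟩
  · -- e1 < e2
    by_cases hmax : e2 = 2 ^ E - 1
    · unfold pval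
      rw [if_neg hne1, if_pos hmax]
      split_ifs <;> exact EReal.coe_lt_top _
    · unfold pval
      rw [if_neg hne1, if_neg hmax]
      have hp1 : (0:ℝ) < (2:ℝ) ^ ((1 : ℤ) - FP.bias E) := by positivity
      have he2z : e2 ≠ 0 := by omega
      rw [if_neg he2z]
      have hpe2 : (0:ℝ) < (2:ℝ) ^ ((e2 : ℤ) - FP.bias E) := by positivity
      by_cases he1z : e1 = 0
      · rw [if_pos he1z]
        rw [EReal.coe_lt_coe_iff]
        calc (2:ℝ) ^ ((1 : ℤ) - FP.bias E) * ((m1 : ℝ) / 2 ^ (S - 1))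
            < (2:ℝ) ^ ((1 : ℤ) - FP.bias E) * 1 := by
              exact mul_lt_mul_of_pos_left hm1' hp1
          _ ≤ (2:ℝ) ^ ((e2 : ℤ) - FP.bias E) := by
              rw [mul_one]
              exact zpow_le_zpow_right₀ one_le_two (by omega)
          _ ≤ (2:ℝ) ^ ((e2 : ℤ) - FP.bias E) * (1 + (m2 : ℝ) / 2 ^ (S - 1)) :=
              le_mul_of_one_le_right hpe2.le (by linarith)
      · rw [if_neg he1z]
        rw [EReal.coe_lt_coe_iff]
        have hpe1 : (0:ℝ) < (2:ℝ) ^ ((e1 : ℤ) - FP.bias E) := by positivity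
        calc (2:ℝ) ^ ((e1 : ℤ) - FP.bias E) * (1 + (m1 : ℝ) / 2 ^ (S - 1))
            < (2:ℝ) ^ ((e1 : ℤ) - FP.bias E) * 2 := by
              exact mul_lt_mul_of_pos_left (by linarith) hpe1
          _ = (2:ℝ) ^ ((e1 : ℤ) - FP.bias E + 1) := (zpow_add_one₀ two_ne_zero _).symm
          _ ≤ (2:ℝ) ^ ((e2 : ℤ) - FP.bias E) := zpow_le_zpow_right₀ one_le_two (by omega)
          _ ≤ (2:ℝ) ^ ((e2 : ℤ) - FP.bias E) * (1 + (m2 : ℝ) / 2 ^ (S - 1)) :=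
              le_mul_of_one_le_right hpe2.le (by linarith)
  · -- e1 = e2, m1 < m2
    have hmm' : (m1 : ℝ) / 2 ^ (S - 1) < (m2 : ℝ) / 2 ^ (S - 1) := by
      gcongr <;> exact_mod_cast hmm
    unfold pval
    rw [if_neg hne1, if_neg hne1]
    by_cases he1z : e1 = 0
    · simp only [if_pos he1z]
      rw [EReal.coe_lt_coe_iff]
      exact mul_lt_mul_of_pos_left hmm' (by positivity)
    · simp only [if_neg he1z]
      rw [EReal.coe_lt_coe_iff]
      exact mul_lt_mul_of_pos_left (by linarith) (by positivity)

end FPaux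

namespace FPaux2
open FPaux

lemma decomp (E S : ℕ) (hE : 1 ≤ E) (hS : 1 ≤ S) (x : BitVec (E + S)) :
    x.toNat = (if FP.sgn E S x then 2 ^ (E + S - 1) else 0)
      + FP.efield E S x * 2 ^ (S - 1) + FP.mfield E S x := by
  have hlt : x.toNat < 2 ^ (E + S) := x.isLt
  have h1 : x.toNat = 2 ^ (S - 1) * (x.toNat / 2 ^ (S - 1)) + FP.mfield E S x :=
    (Nat.div_add_mod _ _).symm
  set q := x.toNat / 2 ^ (S - 1) with hq
  have h2 : q = 2 ^ E * (q / 2 ^ E) + FP.efield E S x := (Nat.div_add_mod _ _).symm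
  have hpow : 2 ^ (S - 1) * 2 ^ E = 2 ^ (E + S - 1) := by
    rw [← pow_add]; congr 1; omega
  have h3 : q / 2 ^ E = x.toNat / 2 ^ (E + S - 1) := by
    rw [hq, Nat.div_div_eq_div_mul, hpow]
  have h4 : x.toNat / 2 ^ (E + S - 1) < 2 := by
    apply Nat.div_lt_of_lt_mul
    calc x.toNat < 2 ^ (E + S) := hlt
      _ = 2 ^ (E + S - 1) * 2 := by rw [← pow_succ]; congr 1; omega
  have hsgn : FP.sgn E S x = decide (x.toNat / 2 ^ (E + S - 1) = 1) := by
    unfold FP.sgn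
    rw [BitVec.getMsbD_eq_getLsbD]
    have h5 : x.toNat / 2 ^ (E + S - 1) % 2 = x.toNat / 2 ^ (E + S - 1) :=
      Nat.mod_eq_of_lt h4
    simp only [BitVec.getLsbD, Nat.testBit_eq_decide_div_mod_eq, Nat.sub_zero, h5]
    simp [show 0 < E + S by omega]
  have key : x.toNat = 2 ^ (E + S - 1) * (x.toNat / 2 ^ (E + S - 1))
      + FP.efield E S x * 2 ^ (S - 1) + FP.mfield E S x := by
    rw [← h3]
    calc x.toNat = 2 ^ (S - 1) * q + FP.mfield E S x := h1
      _ = 2 ^ (S - 1) * (2 ^ E * (q / 2 ^ E) + FP.efield E S x) + FP.mfield E S x := by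
          rw [← h2]
      _ = (2 ^ (S - 1) * 2 ^ E) * (q / 2 ^ E) + FP.efield E S x * 2 ^ (S - 1)
            + FP.mfield E S x := by ring
      _ = _ := by rw [hpow]
  have h6 : x.toNat / 2 ^ (E + S - 1) = 0 ∨ x.toNat / 2 ^ (E + S - 1) = 1 := by interval_cases h : x.toNat / 2 ^ (E + S - 1) <;> simp
  rcases h6 with h0 | h0
  · rw [hsgn, h0]
    norm_num
    calc x.toNat = _ := key
      _ = _ := by rw [h0]; ring
  · rw [hsgn, h0]
    norm_num
    calc x.toNat = _ := key
      _ = _ := by rw [h0]; ring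

lemma lex_of_add_lt {P e1 m1 e2 m2 : ℕ} (hm2 : m2 < P)
    (h : e1 * P + m1 < e2 * P + m2) : e1 < e2 ∨ (e1 = e2 ∧ m1 < m2) := by
  have hle : e1 ≤ e2 := by
    by_contra hc
    push_neg at hc
    have ha : (e2 + 1) * P ≤ e1 * P := Nat.mul_le_mul_right _ hc
    have : e1 * P + m1 < e1 * P + m1 :=
      calc e1 * P + m1 < e2 * P + m2 := h
        _ < e2 * P + P := Nat.add_lt_add_left hm2 _
        _ = (e2 + 1) * P := by ring
        _ ≤ e1 * P := ha
        _ ≤ e1 * P + m1 := Nat.le_add_right _ _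
    exact absurd this (lt_irrefl _)
  rcases Nat.lt_or_ge e1 e2 with h' | h'
  · exact Or.inl h'
  · have he : e1 = e2 := le_antisymm hle h'
    subst he
    exact Or.inr ⟨rfl, Nat.lt_of_add_lt_add_left h⟩

lemma toNat_lt_of_msb {n : ℕ} (u v : BitVec n) (k : ℕ) (hk : k < n)
    (hpre : ∀ j < k, u.getMsbD j = v.getMsbD j)
    (hu : u.getMsbD k = false) (hv : v.getMsbD k = true) :
    u.toNat < v.toNat := by
  have hmsb : ∀ (w : BitVec n) (j : ℕ), j < n → w.getMsbD j = w.toNat.testBit (n - 1 - j) := by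
    intro w j hj
    rw [BitVec.getMsbD_eq_getLsbD]
    simp [hj, BitVec.getLsbD]
  apply Nat.lt_of_testBit (n - 1 - k)
  · rw [← hmsb u k hk]; exact hu
  · rw [← hmsb v k hk]; exact hv
  · intro j hj
    by_cases hjn : j < n
    · have hj' : n - 1 - j < k := by omega
      have e1 : u.toNat.testBit j = u.getMsbD (n - 1 - j) := by
        rw [hmsb u _ (by omega)]; congr 1; omega
      have e2 : v.toNat.testBit j = v.getMsbD (n - 1 - j) := by
        rw [hmsb v _ (by omega)]; congr 1; omega
      rw [e1, e2, hpre _ hj']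
    · have hu2 : u.toNat < 2 ^ j :=
        lt_of_lt_of_le u.isLt (Nat.pow_le_pow_right (by norm_num) (by omega))
      have hv2 : v.toNat < 2 ^ j :=
        lt_of_lt_of_le v.isLt (Nat.pow_le_pow_right (by norm_num) (by omega))
      rw [Nat.testBit_lt_two_pow hu2, Nat.testBit_lt_two_pow hv2]

lemma pval_lt_of_toNat_lt {E S : ℕ} (hE : 1 ≤ E) (hS : 1 ≤ S) {u v : BitVec (E + S)}
    (hv : ¬ FP.isNaN E S v) (hsgn : FP.sgn E S u = FP.sgn E S v)
    (h : u.toNat < v.toNat) :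
    pval E S (FP.efield E S u) (FP.mfield E S u)
      < pval E S (FP.efield E S v) (FP.mfield E S v) := by
  have du := decomp E S hE hS u
  have dv := decomp E S hE hS v
  rw [hsgn] at du
  have h' : FP.efield E S u * 2 ^ (S - 1) + FP.mfield E S u
      < FP.efield E S v * 2 ^ (S - 1) + FP.mfield E S v := by
    rw [du, dv, add_assoc, add_assoc] at h
    exact Nat.lt_of_add_lt_add_left h
  have hlex := lex_of_add_lt (Nat.mod_lt _ (by positivity)) h'
  apply pval_lt _ _ _ _ (Nat.mod_lt _ (by positivity)) (Nat.mod_lt _ (by positivity))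
    ?_ (Nat.mod_lt _ (by positivity)) hlex
  intro hmax
  unfold FP.isNaN at hv
  push_neg at hv
  exact hv hmax

lemma val_lt_val {E S : ℕ} (hE : 1 ≤ E) (hS : 1 ≤ S) {u v : BitVec (E + S)}
    (hu : ¬ FP.isNaN E S u) (hv : ¬ FP.isNaN E S v)
    (hsgn : FP.sgn E S u = FP.sgn E S v)
    (h : if FP.sgn E S u = true then v.toNat < u.toNat else u.toNat < v.toNat) :
    FP.val E S u < FP.val E S v := by
  cases hs : FP.sgn E S u with
  | false =>
    rw [hs] at h; simp only [Bool.false_eq_true, if_false] at h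
    rw [val_eq_pval hs, val_eq_pval (hsgn ▸ hs)]
    exact pval_lt_of_toNat_lt hE hS hv hsgn h
  | true =>
    rw [hs] at h; simp only [if_true] at h
    rw [val_eq_neg_pval hs, val_eq_neg_pval (hsgn ▸ hs)]
    exact EReal.neg_lt_neg_iff.mpr (pval_lt_of_toNat_lt hE hS hu hsgn.symm h)

end FPaux2

theorem fp_dynamic_attractor_bit_is_best (E S : ℕ) (hE : 2 ≤ E) (hS : 2 ≤ S)
    (k : ℕ) (hk : k < E + S)
    (z : BitVec (E + S)) (hz : ¬ FP.isNaN E S z)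
    (hattr : ∀ w : BitVec (E + S), ¬ FP.isNaN E S w →
        (∀ j < k, w.getMsbD j = z.getMsbD j) → FP.val E S z ≤ FP.val E S w)
    (x y : BitVec (E + S)) (hx : ¬ FP.isNaN E S x) (hy : ¬ FP.isNaN E S y)
    (hxpre : ∀ j < k, x.getMsbD j = z.getMsbD j)
    (hypre : ∀ j < k, y.getMsbD j = z.getMsbD j)
    (hxk : x.getMsbD k = z.getMsbD k)
    (hyk : y.getMsbD k = !(z.getMsbD k)) :
    FP.val E S x ≤ FP.val E S y := by
  have hE1 : 1 ≤ E := by omega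
  have hS1 : 1 ≤ S := by omega
  rcases Nat.eq_zero_or_pos k with rfl | hkpos
  · -- k = 0 : the flipped bit is the sign bit
    cases hsz : FP.sgn E S z with
    | true =>
      have hsx : FP.sgn E S x = true := by
        show x.getMsbD 0 = true; rw [hxk]; exact hsz
      have hsy : FP.sgn E S y = false := by
        show y.getMsbD 0 = false; rw [hyk, show z.getMsbD 0 = true from hsz]; rfl
      rw [FPaux.val_eq_neg_pval hsx, FPaux.val_eq_pval hsy]
      calc -FPaux.pval E S (FP.efield E S x) (FP.mfield E S x) ≤ 0 := by
            rw [show (0:EReal) = -0 by simp]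
            exact EReal.neg_le_neg_iff.mpr (FPaux.pval_nonneg _ _ _ _)
        _ ≤ _ := FPaux.pval_nonneg _ _ _ _
    | false =>
      exfalso
      set w : BitVec (E + S) := BitVec.ofNat (E + S) ((2 ^ (E + 1) - 1) * 2 ^ (S - 1)) with hwdef
      have hpw : 2 ^ (E + 1) * 2 ^ (S - 1) = 2 ^ (E + S) := by rw [← pow_add]; congr 1; omega
      have h2E : (2:ℕ) ^ (E + 1) = 2 ^ E * 2 := pow_succ 2 E
      have hEpos : 0 < 2 ^ E := Nat.two_pow_pos E
      have hE1pos : 0 < 2 ^ (E + 1) := Nat.two_pow_pos (E + 1)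
      have hP : 0 < 2 ^ (S - 1) := Nat.two_pow_pos (S - 1)
      have hw : w.toNat = (2 ^ (E + 1) - 1) * 2 ^ (S - 1) := by
        rw [hwdef, BitVec.toNat_ofNat]
        apply Nat.mod_eq_of_lt
        calc (2 ^ (E + 1) - 1) * 2 ^ (S - 1) < 2 ^ (E + 1) * 2 ^ (S - 1) := by
              apply Nat.mul_lt_mul_of_lt_of_le (by omega) (le_refl _) hP
          _ = 2 ^ (E + S) := hpw
      have hmf : FP.mfield E S w = 0 := by
        unfold FP.mfield; rw [hw]; exact Nat.mul_mod_left _ _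
      have hef : FP.efield E S w = 2 ^ E - 1 := by
        unfold FP.efield
        rw [hw, Nat.mul_div_cancel _ hP]
        have heq : 2 ^ (E + 1) - 1 = 2 ^ E + (2 ^ E - 1) := by omega
        rw [heq, Nat.add_mod_left]
        exact Nat.mod_eq_of_lt (by omega)
      have hnan : ¬ FP.isNaN E S w := by simp [FP.isNaN, hmf]
      have hsw : FP.sgn E S w = true := by
        cases hsww : FP.sgn E S w with
        | true => rfl
        | false =>
          exfalso
          have hd := FPaux2.decomp E S hE1 hS1 w
          rw [hsww, hw, hef, hmf] at hd
          simp at hd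
          omega
      have hvw : FP.val E S w = ⊥ := by simp [FP.val, hef, hsw]
      have hle := hattr w hnan (by intro j hj; omega)
      rw [hvw, le_bot_iff, FPaux.val_eq_pval hsz] at hle
      exact FPaux.pval_ne_bot _ _ _ _ hle
  · -- k ≥ 1 : the sign bits all agree
    have hsxz : FP.sgn E S x = FP.sgn E S z := hxpre 0 hkpos
    have hsyz : FP.sgn E S y = FP.sgn E S z := hypre 0 hkpos
    have hxy : ∀ j < k, x.getMsbD j = y.getMsbD j :=
      fun j hj => (hxpre j hj).trans (hypre j hj).symm
    cases hsz : FP.sgn E S z with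
    | false =>
      cases hb : z.getMsbD k with
      | false =>
        apply le_of_lt
        apply FPaux2.val_lt_val hE1 hS1 hx hy (by rw [hsxz, hsyz])
        rw [hsxz, hsz]
        simp only [Bool.false_eq_true, if_false]
        exact FPaux2.toNat_lt_of_msb x y k hk hxy (by rw [hxk, hb]) (by rw [hyk, hb]; rfl)
      | true =>
        exfalso
        have h1 : y.toNat < z.toNat :=
          FPaux2.toNat_lt_of_msb y z k hk hypre (by rw [hyk, hb]; rfl) hb
        have h2 : FP.val E S y < FP.val E S z := by
          apply FPaux2.val_lt_val hE1 hS1 hy hz hsyz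
          rw [hsyz, hsz]
          simpa using h1
        exact absurd (hattr y hy hypre) (not_le.mpr h2)
    | true =>
      cases hb : z.getMsbD k with
      | true =>
        apply le_of_lt
        apply FPaux2.val_lt_val hE1 hS1 hx hy (by rw [hsxz, hsyz])
        rw [hsxz, hsz]
        simp only [if_true]
        exact FPaux2.toNat_lt_of_msb y x k hk (fun j hj => (hxy j hj).symm)
          (by rw [hyk, hb]; rfl) (by rw [hxk, hb])
      | false =>
        exfalso
        have h1 : z.toNat < y.toNat :=
          FPaux2.toNat_lt_of_msb z y k hk (fun j hj => (hypre j hj).symm) hb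
            (by rw [hyk, hb]; rfl)
        have h2 : FP.val E S y < FP.val E S z := by
          apply FPaux2.val_lt_val hE1 hS1 hy hz hsyz
          rw [hsyz, hsz]
          simpa using h1
        exact absurd (hattr y hy hypre) (not_le.mpr h2)
end

section
/- Fix E ≥ 2 and S ≥ 2, let n := E + S, and let 1 ≤ k ≤ n. Let z be a non-NaN FP pattern of sort (E,S) with sgn z = false (sign bit 0) and z.getMsbD j = false for every j with k ≤ j < n (all bits strictly below position k are zero). Then val z ≤ val y for every non-NaN pattern y satisfying y.getMsbD j = z.getMsbD j for all j < k. In other words, when the assigned prefix has positive sign, extending it with all zeros yields the dynamic attractor (the minimum-value non-NaN extension). -/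
/-- Natural-number "weight" monotonicity for positive FP values. -/
lemma fp_w_mono (B e e' m m' : ℕ) (hB : 0 < B) (hm : m < B) (hm' : m' < B)
    (h : e * B + m ≤ e' * B + m') :
    (if e = 0 then m else 2 ^ (e - 1) * (B + m)) ≤
    (if e' = 0 then m' else 2 ^ (e' - 1) * (B + m')) := by
  have hee' : e ≤ e' := by
    by_contra hc
    push_neg at hc
    have h1 : (e' + 1) * B ≤ e * B := Nat.mul_le_mul_right B hc
    nlinarith
  split_ifs with h0 h0'
  · subst h0; subst h0'; simpa using h
  · have h2 : (0:ℕ) < 2 ^ (e' - 1) := Nat.pow_pos (by norm_num)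
    calc m ≤ B + m' := by omega
    _ ≤ 2 ^ (e' - 1) * (B + m') := Nat.le_mul_of_pos_left _ h2
  · omega
  · rcases eq_or_lt_of_le hee' with rfl | hlt
    · have hmm : m ≤ m' := Nat.le_of_add_le_add_left h
      exact Nat.mul_le_mul_left _ (by omega)
    · calc 2 ^ (e - 1) * (B + m) ≤ 2 ^ (e - 1) * (2 * B) :=
            Nat.mul_le_mul_left _ (by omega)
      _ = 2 ^ e * B := by rw [← mul_assoc, ← pow_succ]; congr 2; omega
      _ ≤ 2 ^ (e' - 1) * B := Nat.mul_le_mul_right _ (Nat.pow_le_pow_right (by norm_num) (by omega))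
      _ ≤ 2 ^ (e' - 1) * (B + m') := Nat.mul_le_mul_left _ (by omega)

theorem fp_pos_prefix_all_zeros_attractor (E S : ℕ) (hE : 2 ≤ E) (hS : 2 ≤ S)
    (k : ℕ) (hk1 : 1 ≤ k) (hk2 : k ≤ E + S)
    (z : BitVec (E + S)) (hz : ¬ FP.isNaN E S z)
    (hsgn : FP.sgn E S z = false)
    (hlow : ∀ j, k ≤ j → j < E + S → z.getMsbD j = false) :
    ∀ y : BitVec (E + S), ¬ FP.isNaN E S y →
      (∀ j < k, y.getMsbD j = z.getMsbD j) → FP.val E S z ≤ FP.val E S y := by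
  intro y hy hpre
  have hn1 : 1 ≤ E + S := by omega
  have tdiv : ∀ (a i : ℕ), (a / 2 ^ (E + S - k)).testBit i = a.testBit ((E + S - k) + i) := by
    intro a i
    rw [← Nat.shiftRight_eq_div_pow]
    exact Nat.testBit_shiftRight a
  -- getMsbD to testBit
  have hmsb : ∀ (x : BitVec (E + S)) (j : ℕ), j < E + S → x.getMsbD j = x.toNat.testBit (E + S - 1 - j) := by
    intro x j hj
    simp [BitVec.getMsbD, hj]
    rfl
  have hp : True := trivial
  -- z's low bits vanish
  have hzmod : z.toNat % 2 ^ (E + S - k) = 0 := by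
    apply Nat.eq_of_testBit_eq
    intro i
    rw [Nat.testBit_mod_two_pow, Nat.zero_testBit]
    by_cases hi : i < E + S - k
    · simp only [hi, decide_true, Bool.true_and]
      have h1 : z.toNat.testBit i = z.getMsbD (E + S - 1 - i) := by
        rw [hmsb z (E + S - 1 - i) (by omega)]
        congr 1
        omega
      rw [h1, hlow _ (by omega) (by omega)]
    · simp [hi]
  -- quotients agree
  have hq : y.toNat / 2 ^ (E + S - k) = z.toNat / 2 ^ (E + S - k) := by
    apply Nat.eq_of_testBit_eq
    intro i
    rw [tdiv, tdiv]
    by_cases hi : (E + S - k) + i < E + S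
    · rw [show y.toNat.testBit ((E + S - k) + i) = y.getMsbD (E + S - 1 - ((E + S - k) + i)) by
          rw [hmsb y _ (by omega)]; congr 1; omega,
        show z.toNat.testBit ((E + S - k) + i) = z.getMsbD (E + S - 1 - ((E + S - k) + i)) by
          rw [hmsb z _ (by omega)]; congr 1; omega]
      exact hpre _ (by omega)
    · rw [Nat.testBit_lt_two_pow (lt_of_lt_of_le y.isLt (Nat.pow_le_pow_right (by norm_num) (by omega))),
        Nat.testBit_lt_two_pow (lt_of_lt_of_le z.isLt (Nat.pow_le_pow_right (by norm_num) (by omega)))]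
  -- toNat inequality
  have htle : z.toNat ≤ y.toNat := by
    have h1 : z.toNat = z.toNat / 2 ^ (E + S - k) * 2 ^ (E + S - k) :=
      (Nat.div_mul_cancel (Nat.dvd_of_mod_eq_zero hzmod)).symm
    rw [h1, ← hq]
    exact Nat.div_mul_le_self _ _
  -- signs
  have hsgny : FP.sgn E S y = false := by
    rw [FP.sgn, hpre 0 (by omega)]; exact hsgn
  -- sign false → toNat < 2^(E + S - 1)
  have hsmall : ∀ x : BitVec (E + S), FP.sgn E S x = false → x.toNat < 2 ^ (E + S - 1) := by
    intro x hsx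
    have hmsb0 := hmsb x 0 (by omega)
    norm_num at hmsb0
    have h1 : x.toNat.testBit (E + S - 1) = false := by rw [← hmsb0]; exact hsx
    rw [Nat.testBit_eq_decide_div_mod_eq] at h1
    simp only [decide_eq_false_iff_not] at h1
    have hPpos : 0 < 2 ^ (E + S - 1) := Nat.pow_pos (by norm_num)
    have h2 : x.toNat / 2 ^ (E + S - 1) < 2 := by
      rw [Nat.div_lt_iff_lt_mul hPpos]
      calc x.toNat < 2 ^ (E + S) := x.isLt
      _ = 2 * 2 ^ (E + S - 1) := by rw [← pow_succ']; congr 1; omega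
    have h3 : x.toNat / 2 ^ (E + S - 1) = 0 := by
      generalize hg : x.toNat / 2 ^ (E + S - 1) = q at h1 h2 ⊢
      omega
    have h4 := Nat.div_add_mod x.toNat (2 ^ (E + S - 1))
    rw [h3] at h4
    have h5 := Nat.mod_lt x.toNat hPpos
    omega
  set B := 2 ^ (S - 1) with hB
  have hBpos : 0 < B := Nat.pow_pos (by norm_num)
  -- efield = toNat / B for small patterns
  have hef : ∀ x : BitVec (E + S), FP.sgn E S x = false → FP.efield E S x = x.toNat / B := by
    intro x hsx
    rw [FP.efield]
    apply Nat.mod_eq_of_lt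
    rw [Nat.div_lt_iff_lt_mul hBpos]
    calc x.toNat < 2 ^ (E + S - 1) := hsmall x hsx
    _ = 2 ^ E * B := by rw [hB, ← pow_add]; congr 1; omega
  have hefz := hef z hsgn
  have hefy := hef y hsgny
  have hdecz : FP.efield E S z * B + FP.mfield E S z = z.toNat := by
    rw [hefz, FP.mfield, ← hB, Nat.mul_comm]; exact Nat.div_add_mod _ _
  have hdecy : FP.efield E S y * B + FP.mfield E S y = y.toNat := by
    rw [hefy, FP.mfield, ← hB, Nat.mul_comm]; exact Nat.div_add_mod _ _
  have hmz : FP.mfield E S z < B := Nat.mod_lt _ hBpos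
  have hmy : FP.mfield E S y < B := Nat.mod_lt _ hBpos
  have hkey : FP.efield E S z * B + FP.mfield E S z ≤ FP.efield E S y * B + FP.mfield E S y := by
    rw [hdecz, hdecy]; exact htle
  have heyub : FP.efield E S y < 2 ^ E := by
    rw [FP.efield]; exact Nat.mod_lt _ (Nat.pow_pos (by norm_num))
  rw [FP.val, FP.val, hsgn, hsgny]
  by_cases hey : FP.efield E S y = 2 ^ E - 1
  · simp only [hey, if_true, if_false, Bool.false_eq_true]
    exact le_top
  · by_cases hez : FP.efield E S z = 2 ^ E - 1
    · exfalso
      have h1 : FP.efield E S z ≤ FP.efield E S y := by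
        rw [hefz, hefy]; exact Nat.div_le_div_right htle
      omega
    · simp only [hez, hey, if_false, Bool.false_eq_true, if_neg]
      set b := FP.bias E with hb
      set ez := FP.efield E S z with hezd
      set ey := FP.efield E S y with heyd
      set mz := FP.mfield E S z with hmzd
      set my := FP.mfield E S y with hmyd
      have hBcast : ((B : ℕ) : ℝ) = (2:ℝ) ^ (S - 1) := by
        rw [hB]; push_cast; ring
      set C : ℝ := 2 ^ ((1:ℤ) - b) / (2:ℝ) ^ (S - 1) with hC
      have hCpos : 0 ≤ C :=
        div_nonneg (zpow_nonneg (by norm_num) _) (by positivity)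
      have hform0 : ∀ m : ℕ, (2:ℝ) ^ ((1:ℤ) - b) * ((m : ℝ) / (2:ℝ) ^ (S - 1)) = C * (m : ℝ) := by
        intro m
        rw [hC]; field_simp
      have hform1 : ∀ (e m : ℕ), e ≠ 0 →
          (2:ℝ) ^ ((e:ℤ) - b) * (1 + (m : ℝ) / (2:ℝ) ^ (S - 1)) = C * ((2 ^ (e - 1) * (B + m) : ℕ) : ℝ) := by
        intro e m h0
        have hsplit : ((e:ℤ) - b) = ((1:ℤ) - b) + ((e - 1 : ℕ) : ℤ) := by
          push_cast; omega
        rw [hsplit, zpow_add₀ (by norm_num : (2:ℝ) ≠ 0), zpow_natCast, hC]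
        push_cast [hBcast]
        field_simp
      have hw := fp_w_mono B ez ey mz my hBpos hmz hmy hkey
      split_ifs with hz0 hy0 hy0
      · simp only [hz0, hy0, if_true, eq_self_iff_true] at hw
        simp only [EReal.coe_le_coe_iff, one_mul]; rw [hform0 mz, hform0 my]
        exact mul_le_mul_of_nonneg_left (Nat.cast_le.2 hw) hCpos
      · simp only [hz0, hy0, if_true, eq_self_iff_true, if_false, if_neg hy0] at hw
        simp only [EReal.coe_le_coe_iff, one_mul]; rw [hform0 mz, hform1 ey my hy0]
        exact mul_le_mul_of_nonneg_left (Nat.cast_le.2 hw) hCpos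
      · simp only [hz0, hy0, if_true, eq_self_iff_true, if_false, if_neg hz0] at hw
        simp only [EReal.coe_le_coe_iff, one_mul]; rw [hform1 ez mz hz0, hform0 my]
        exact mul_le_mul_of_nonneg_left (Nat.cast_le.2 hw) hCpos
      · simp only [if_neg hz0, if_neg hy0] at hw
        simp only [EReal.coe_le_coe_iff, one_mul]; rw [hform1 ez mz hz0, hform1 ey my hy0]
        exact mul_le_mul_of_nonneg_left (Nat.cast_le.2 hw) hCpos
end

section
/- Fix E ≥ 2 and S ≥ 2, let n := E + S, and let 1 ≤ k ≤ n. Let z be an FP pattern of sort (E,S) with sgn z = true (sign bit 1), such that there exists j with 1 ≤ j < k, j ≤ E, and z.getMsbD j = false (some assigned exponent bit is zero), and such that z.getMsbD j = true for every j with k ≤ j < n (all bits strictly below position k are one). Then z is not NaN, and val z ≤ val y for every non-NaN pattern y satisfying y.getMsbD j = z.getMsbD j for all j < k. In other words, when the assigned prefix has negative sign and contains a zero exponent bit, extending it with all ones yields the dynamic attractor (the minimum-value non-NaN extension). -/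
namespace FPAux

lemma testBit_div_pow (x n m : ℕ) : (x / 2^n).testBit m = x.testBit (n+m) := by
  simp [Nat.testBit_eq_decide_div_mod_eq, Nat.div_div_eq_div_mul, ← pow_add]

lemma getMsbD_eq_testBit {w : ℕ} (x : BitVec w) (j : ℕ) (hj : j < w) :
    x.getMsbD j = x.toNat.testBit (w-1-j) := by
  simp [BitVec.getMsbD, BitVec.getLsbD, hj]

/-- Magnitude code: value magnitude is `2^(1-bias) * Nval / 2^(S-1)`. -/
def Nval (S e m : ℕ) : ℕ := if e = 0 then m else 2^(e-1)*(2^(S-1)+m)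

lemma Nval_mono (S e1 m1 e2 m2 : ℕ) (h1 : m1 < 2^(S-1)) (h2 : m2 < 2^(S-1))
    (h : e1 * 2^(S-1) + m1 ≤ e2 * 2^(S-1) + m2) : Nval S e1 m1 ≤ Nval S e2 m2 := by
  have he : e1 ≤ e2 := by
    by_contra hc
    push_neg at hc
    have : (e2+1) * 2^(S-1) ≤ e1 * 2^(S-1) := Nat.mul_le_mul_right _ hc
    have h3 : (e2+1) * 2^(S-1) = e2 * 2^(S-1) + 2^(S-1) := by ring
    omega
  rcases eq_or_lt_of_le he with rfl | hlt
  · have hm : m1 ≤ m2 := by omega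
    unfold Nval; split
    · exact hm
    · exact Nat.mul_le_mul_left _ (by omega)
  · have he2 : e2 ≠ 0 := by omega
    unfold Nval
    rw [if_neg he2]
    by_cases h0 : e1 = 0
    · rw [if_pos h0]
      calc m1 ≤ 2^(S-1) := le_of_lt h1
        _ ≤ 2^(e2-1)*(2^(S-1)+m2) := by
            calc 2^(S-1) = 1 * 2^(S-1) := (one_mul _).symm
              _ ≤ 2^(e2-1)*(2^(S-1)+m2) :=
                Nat.mul_le_mul (Nat.one_le_two_pow) (by omega)
    · rw [if_neg h0]
      calc 2^(e1-1)*(2^(S-1)+m1) ≤ 2^(e1-1)*(2*2^(S-1)) := by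
            apply Nat.mul_le_mul_left; omega
        _ = 2^e1 * 2^(S-1) := by
            rw [← mul_assoc, mul_comm (2^(e1-1)) 2, ← pow_succ']
            congr 2; omega
        _ ≤ 2^(e2-1) * 2^(S-1) := by
            apply Nat.mul_le_mul_right
            exact Nat.pow_le_pow_right (by norm_num) (by omega)
        _ ≤ 2^(e2-1)*(2^(S-1)+m2) := by apply Nat.mul_le_mul_left; omega

lemma val_eq (E S : ℕ) (x : BitVec (E+S)) (hs : FP.sgn E S x = true)
    (he : FP.efield E S x ≠ 2^E - 1) :
    FP.val E S x =
      ((-(2^((1:ℤ) - FP.bias E) * (Nval S (FP.efield E S x) (FP.mfield E S x) : ℝ) / 2^(S-1))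
        : ℝ) : EReal) := by
  unfold FP.val
  rw [if_neg he]
  have hd : ((2:ℝ)^(S-1)) ≠ 0 := by positivity
  by_cases h0 : FP.efield E S x = 0
  · rw [if_pos h0]
    congr 1
    simp only [hs, if_true, Nval, h0, if_pos rfl]
    ring
  · rw [if_neg h0]
    congr 1
    simp only [hs, if_true, Nval, if_neg h0]
    have hzp : ((2:ℝ)^((FP.efield E S x : ℤ) - FP.bias E))
        = 2^((1:ℤ) - FP.bias E) * 2^(FP.efield E S x - 1) := by
      have : (FP.efield E S x : ℤ) - FP.bias E
          = (1 - FP.bias E) + ((FP.efield E S x - 1 : ℕ) : ℤ) := by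
        push_cast [Nat.cast_sub (Nat.one_le_iff_ne_zero.mpr h0)]
        ring
      rw [this, zpow_add₀ (by norm_num), zpow_natCast]
    rw [hzp]
    push_cast
    field_simp

end FPAux

theorem fp_neg_prefix_all_ones_attractor (E S : ℕ) (hE : 2 ≤ E) (hS : 2 ≤ S)
    (k : ℕ) (hk1 : 1 ≤ k) (hk2 : k ≤ E + S)
    (z : BitVec (E + S))
    (hsgn : FP.sgn E S z = true)
    (hexp : ∃ j, 1 ≤ j ∧ j < k ∧ j ≤ E ∧ z.getMsbD j = false)
    (hlow : ∀ j, k ≤ j → j < E + S → z.getMsbD j = true) :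
    ¬ FP.isNaN E S z ∧
    (∀ y : BitVec (E + S), ¬ FP.isNaN E S y →
      (∀ j < k, y.getMsbD j = z.getMsbD j) → FP.val E S z ≤ FP.val E S y) := by
  obtain ⟨j, hj1, hjk, hjE, hjb⟩ := hexp
  -- a pattern with exponent bit j zero has non-all-ones exponent field
  have efield_ne : ∀ x : BitVec (E + S), x.getMsbD j = false → FP.efield E S x ≠ 2^E - 1 := by
    intro x hb h
    have h1 : (FP.efield E S x).testBit (E-j) = true := by
      rw [h, Nat.testBit_two_pow_sub_one]
      simp only [decide_eq_true_eq]
      omega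
    unfold FP.efield at h1
    rw [Nat.testBit_mod_two_pow, FPAux.testBit_div_pow] at h1
    rw [FPAux.getMsbD_eq_testBit x j (by omega)] at hb
    have heq : (S-1) + (E-j) = (E+S) - 1 - j := by omega
    rw [heq, hb] at h1
    simp at h1
  have hez : FP.efield E S z ≠ 2^E - 1 := efield_ne z hjb
  refine ⟨fun h => hez h.1, ?_⟩
  intro y hyNaN hagree
  -- y's exponent bit j is also zero
  have hyb : y.getMsbD j = false := by rw [hagree j hjk]; exact hjb
  have hey : FP.efield E S y ≠ 2^E - 1 := efield_ne y hyb
  -- y's sign is also 1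
  have hsy : FP.sgn E S y = true := by
    unfold FP.sgn at *
    rw [hagree 0 hk1]; exact hsgn
  -- prefix equality of toNats
  have hpre : y.toNat / 2^((E+S)-k) = z.toNat / 2^((E+S)-k) := by
    apply Nat.eq_of_testBit_eq
    intro i
    rw [FPAux.testBit_div_pow, FPAux.testBit_div_pow]
    by_cases hi : ((E+S)-k)+i < (E+S)
    · have hjlt : (E+S)-1-(((E+S)-k)+i) < k := by omega
      have := hagree _ hjlt
      rw [FPAux.getMsbD_eq_testBit _ _ (by omega),
          FPAux.getMsbD_eq_testBit _ _ (by omega)] at this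
      rwa [show (E+S)-1-((E+S)-1-(((E+S)-k)+i)) = ((E+S)-k)+i by omega] at this
    · have h2 : (2:ℕ)^(E+S) ≤ 2^(((E+S)-k)+i) := Nat.pow_le_pow_right (by norm_num) (by omega)
      rw [Nat.testBit_lt_two_pow (lt_of_lt_of_le y.isLt h2),
          Nat.testBit_lt_two_pow (lt_of_lt_of_le z.isLt h2)]
  -- z's low bits are all ones
  have hzl : z.toNat % 2^((E+S)-k) = 2^((E+S)-k) - 1 := by
    apply Nat.eq_of_testBit_eq
    intro i
    rw [Nat.testBit_mod_two_pow, Nat.testBit_two_pow_sub_one]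
    by_cases hi : i < (E+S)-k
    · have := hlow ((E+S)-1-i) (by omega) (by omega)
      rw [FPAux.getMsbD_eq_testBit _ _ (by omega),
          show (E+S)-1-((E+S)-1-i) = i by omega] at this
      simp [hi, this]
    · simp [hi]
  -- hence y.toNat ≤ z.toNat
  have hle : y.toNat ≤ z.toNat := by
    have h1 := Nat.div_add_mod y.toNat (2^((E+S)-k))
    have h2 := Nat.div_add_mod z.toNat (2^((E+S)-k))
    rw [hpre] at h1
    have h3 : y.toNat % 2^((E+S)-k) < 2^((E+S)-k) := Nat.mod_lt _ (by positivity)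
    have h4 : 0 < 2^((E+S)-k) := by positivity
    omega
  -- sign bit set means toNat ≥ 2^((E+S)-1)
  have hge : ∀ x : BitVec (E + S), FP.sgn E S x = true → 2^((E+S)-1) ≤ x.toNat := by
    intro x hx
    unfold FP.sgn at hx
    rw [FPAux.getMsbD_eq_testBit x 0 (by omega)] at hx
    simpa using Nat.ge_two_pow_of_testBit hx
  have hmodsub : ∀ x : BitVec (E + S), FP.sgn E S x = true →
      x.toNat % 2^((E+S)-1) = x.toNat - 2^((E+S)-1) := by
    intro x hx
    have h1 := hge x hx
    have h2 : x.toNat < 2^(E+S) := x.isLt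
    have h3 : (2:ℕ)^(E+S) = 2*2^((E+S)-1) := by
      rw [← pow_succ']; congr 1; omega
    rw [Nat.mod_eq_sub_mod h1, Nat.mod_eq_of_lt (by omega)]
  -- the magnitude code: toNat % 2^((E+S)-1) = mfield + 2^(S-1) * efield
  have hC : ∀ x : BitVec (E + S), x.toNat % 2^((E+S)-1)
      = FP.mfield E S x + 2^(S-1) * FP.efield E S x := by
    intro x
    have h1 : (2:ℕ)^((E+S)-1) = 2^(S-1) * 2^E := by
      rw [← pow_add]; congr 1; omega
    rw [h1, Nat.mod_mul]
    rfl
  have hCle : FP.efield E S y * 2^(S-1) + FP.mfield E S y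
      ≤ FP.efield E S z * 2^(S-1) + FP.mfield E S z := by
    have h1 := hC y
    have h2 := hC z
    rw [hmodsub y hsy] at h1
    rw [hmodsub z hsgn] at h2
    have h4 := hge y hsy
    have h5 : FP.mfield E S y + 2^(S-1) * FP.efield E S y
        ≤ FP.mfield E S z + 2^(S-1) * FP.efield E S z := by omega
    calc FP.efield E S y * 2^(S-1) + FP.mfield E S y
        = FP.mfield E S y + 2^(S-1) * FP.efield E S y := by ring
      _ ≤ FP.mfield E S z + 2^(S-1) * FP.efield E S z := h5
      _ = FP.efield E S z * 2^(S-1) + FP.mfield E S z := by ring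
  have hmy : FP.mfield E S y < 2^(S-1) := Nat.mod_lt _ (by positivity)
  have hmz : FP.mfield E S z < 2^(S-1) := Nat.mod_lt _ (by positivity)
  have hN : FPAux.Nval S (FP.efield E S y) (FP.mfield E S y)
      ≤ FPAux.Nval S (FP.efield E S z) (FP.mfield E S z) :=
    FPAux.Nval_mono S _ _ _ _ hmy hmz hCle
  rw [FPAux.val_eq E S z hsgn hez, FPAux.val_eq E S y hsy hey]
  rw [EReal.coe_le_coe_iff]
  apply neg_le_neg
  gcongr
end

section
/- (Theorem 2 of the paper, minimization case.) Fix E ≥ 2 and S ≥ 2, let n := E + S, and let 𝒮 be a nonempty set of non-NaN FP patterns of sort (E,S). Suppose x ∈ 𝒮 satisfies the following greedy condition for every k < n: for every non-NaN pattern z with z.getMsbD j = x.getMsbD j for all j < k and with val z ≤ val w for every non-NaN pattern w satisfying w.getMsbD j = x.getMsbD j for all j < k (i.e., z is a dynamic attractor for the k-bit prefix of x), if there exists y ∈ 𝒮 with y.getMsbD j = x.getMsbD j for all j < k and y.getMsbD k = z.getMsbD k, then x.getMsbD k = z.getMsbD k. Then val x ≤ val y for every y ∈ 𝒮; i.e.,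 any pattern lexicographically maximizing the attractor trajectory attains the minimum IEEE 754 value over 𝒮. -/
namespace FPaux

instance (w : ℕ) : Finite (BitVec w) :=
  Finite.of_injective (fun x => x.toFin) (fun a b h => by
    apply BitVec.toNat_injective
    simpa [BitVec.toFin] using congrArg Fin.val h)

/-- magnitude: all bits except the sign bit. -/
def mag (E S : ℕ) (x : BitVec (E + S)) : ℕ := x.toNat % 2 ^ (E + S - 1)

/-- signed key: value order of non-NaN patterns follows this key. -/
def key (E S : ℕ) (x : BitVec (E + S)) : ℤ :=
  if FP.sgn E S x then -(mag E S x) else mag E S x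

/-- fp value as a function of sign, exponent and mantissa fields. -/
noncomputable def fpval (E S : ℕ) (sg : Bool) (e m : ℕ) : EReal :=
  if e = 2 ^ E - 1 then
    (if sg then (⊥ : EReal) else (⊤ : EReal))
  else if e = 0 then
    (((if sg then (-1 : ℝ) else 1) * 2 ^ ((1 : ℤ) - FP.bias E) *
        ((m : ℝ) / 2 ^ (S - 1)) : ℝ) : EReal)
  else
    (((if sg then (-1 : ℝ) else 1) * 2 ^ ((e : ℤ) - FP.bias E) *
        (1 + (m : ℝ) / 2 ^ (S - 1)) : ℝ) : EReal)

lemma val_eq (E S : ℕ) (x : BitVec (E + S)) :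
    FP.val E S x = fpval E S (FP.sgn E S x) (FP.efield E S x) (FP.mfield E S x) := rfl

lemma fpval_neg (E S : ℕ) (e m : ℕ) : fpval E S true e m = - fpval E S false e m := by
  unfold fpval
  by_cases h1 : e = 2 ^ E - 1
  · rw [if_pos h1, if_pos h1, if_pos rfl, if_neg Bool.false_ne_true, EReal.neg_top]
  · by_cases h2 : e = 0
    · rw [if_neg h1, if_neg h1, if_pos h2, if_pos h2, if_pos rfl, if_neg Bool.false_ne_true,
        ← EReal.coe_neg]
      congr 1
      ring
    · rw [if_neg h1, if_neg h1, if_neg h2, if_neg h2, if_pos rfl, if_neg Bool.false_ne_true,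
        ← EReal.coe_neg]
      congr 1
      ring

lemma fpval_false_nonneg (E S : ℕ) (e m : ℕ) : 0 ≤ fpval E S false e m := by
  unfold fpval
  simp only [Bool.false_eq_true, if_false]
  by_cases h1 : e = 2 ^ E - 1
  · rw [if_pos h1]; exact le_top
  · by_cases h2 : e = 0
    · rw [if_neg h1, if_pos h2, ← EReal.coe_zero, EReal.coe_le_coe_iff]
      positivity
    · rw [if_neg h1, if_neg h2, ← EReal.coe_zero, EReal.coe_le_coe_iff]
      positivity

lemma mfield_eq (E S : ℕ) (x : BitVec (E + S)) (hS : 1 ≤ S) :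
    FP.mfield E S x = mag E S x % 2 ^ (S - 1) := by
  unfold FP.mfield mag
  rw [Nat.mod_mod_of_dvd]
  exact pow_dvd_pow 2 (by omega)

lemma efield_eq (E S : ℕ) (x : BitVec (E + S)) (hS : 1 ≤ S) :
    FP.efield E S x = mag E S x / 2 ^ (S - 1) := by
  unfold FP.efield mag
  have h : 2 ^ (E + S - 1) = 2 ^ (S - 1) * 2 ^ E := by
    rw [← pow_add]; congr 1; omega
  rw [h, Nat.mod_mul_right_div_self]

lemma mfield_lt (E S : ℕ) (x : BitVec (E + S)) : FP.mfield E S x < 2 ^ (S - 1) :=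
  Nat.mod_lt _ (by positivity)

lemma efield_lt (E S : ℕ) (x : BitVec (E + S)) : FP.efield E S x < 2 ^ E :=
  Nat.mod_lt _ (by positivity)

lemma fpval_mono (E S : ℕ) (hE : 2 ≤ E) (hS : 2 ≤ S) {e1 m1 e2 m2 : ℕ}
    (hm1 : m1 < 2 ^ (S - 1)) (hm2 : m2 < 2 ^ (S - 1))
    (h1 : ¬(e1 = 2 ^ E - 1 ∧ m1 ≠ 0)) (h2 : ¬(e2 = 2 ^ E - 1 ∧ m2 ≠ 0))
    (he2 : e2 < 2 ^ E)
    (hlex : e1 < e2 ∨ (e1 = e2 ∧ m1 ≤ m2)) :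
    fpval E S false e1 m1 ≤ fpval E S false e2 m2 := by
  have hEpow : 4 ≤ 2 ^ E := by
    calc (4:ℕ) = 2 ^ 2 := rfl
      _ ≤ 2 ^ E := Nat.pow_le_pow_right (by norm_num) hE
  by_cases he2' : e2 = 2 ^ E - 1
  · unfold fpval
    simp only [Bool.false_eq_true, if_false]
    rw [if_pos he2']
    exact le_top
  · have he1' : e1 ≠ 2 ^ E - 1 := by omega
    have hP : (0:ℝ) < 2 ^ (S - 1) := by positivity
    have hm1P : (m1 : ℝ) / 2 ^ (S - 1) ≤ 1 := by
      rw [div_le_one hP]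
      exact_mod_cast hm1.le
    have hm2P : (0:ℝ) ≤ (m2 : ℝ) / 2 ^ (S - 1) := by positivity
    unfold fpval
    simp only [Bool.false_eq_true, if_false, one_mul]
    rw [if_neg he1', if_neg he2']
    by_cases he10 : e1 = 0 <;> by_cases he20 : e2 = 0
    · rw [if_pos he10, if_pos he20, EReal.coe_le_coe_iff]
      have hm12 : (m1:ℝ) ≤ m2 := by exact_mod_cast (by omega : m1 ≤ m2)
      have h2p : (0:ℝ) ≤ 2 ^ ((1:ℤ) - FP.bias E) := by positivity
      gcongr
    · -- e1 = 0 < e2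
      rw [if_pos he10, if_neg he20, EReal.coe_le_coe_iff]
      have hle : ((1:ℤ) - FP.bias E) ≤ (e2:ℤ) - FP.bias E := by
        have : (1:ℤ) ≤ (e2:ℤ) := by exact_mod_cast Nat.one_le_iff_ne_zero.mpr he20
        omega
      calc (2:ℝ) ^ ((1:ℤ) - FP.bias E) * ((m1:ℝ) / 2 ^ (S-1))
          ≤ 2 ^ ((1:ℤ) - FP.bias E) * 1 := by gcongr
        _ = 2 ^ ((1:ℤ) - FP.bias E) := mul_one _
        _ ≤ 2 ^ ((e2:ℤ) - FP.bias E) := zpow_le_zpow_right₀ (by norm_num) hle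
        _ ≤ 2 ^ ((e2:ℤ) - FP.bias E) * (1 + (m2:ℝ) / 2 ^ (S-1)) := by
            nth_rewrite 1 [← mul_one ((2:ℝ) ^ ((e2:ℤ) - FP.bias E))]
            gcongr
            linarith
    · omega
    · -- 0 < e1, 0 < e2
      rw [if_neg he10, if_neg he20, EReal.coe_le_coe_iff]
      rcases hlex with hlt | ⟨heq, hm12⟩
      · have hle : (e1:ℤ) - FP.bias E + 1 ≤ (e2:ℤ) - FP.bias E := by
          have : (e1:ℤ) + 1 ≤ (e2:ℤ) := by exact_mod_cast hlt
          omega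
        calc (2:ℝ) ^ ((e1:ℤ) - FP.bias E) * (1 + (m1:ℝ) / 2 ^ (S-1))
            ≤ 2 ^ ((e1:ℤ) - FP.bias E) * 2 := by
              gcongr
              linarith
          _ = 2 ^ ((e1:ℤ) - FP.bias E + 1) := (zpow_add_one₀ (by norm_num) _).symm
          _ ≤ 2 ^ ((e2:ℤ) - FP.bias E) := zpow_le_zpow_right₀ (by norm_num) hle
          _ ≤ 2 ^ ((e2:ℤ) - FP.bias E) * (1 + (m2:ℝ) / 2 ^ (S-1)) := by
              nth_rewrite 1 [← mul_one ((2:ℝ) ^ ((e2:ℤ) - FP.bias E))]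
              gcongr
              linarith
      · subst heq
        have hm12' : (m1:ℝ) ≤ m2 := by exact_mod_cast hm12
        have h2p : (0:ℝ) ≤ 2 ^ ((e1:ℤ) - FP.bias E) := by positivity
        gcongr

lemma lex_of_mag_le (E S : ℕ) (hS1 : 1 ≤ S) {a b : BitVec (E + S)}
    (hab : mag E S a ≤ mag E S b) :
    FP.efield E S a < FP.efield E S b ∨
      (FP.efield E S a = FP.efield E S b ∧ FP.mfield E S a ≤ FP.mfield E S b) := by
  rw [efield_eq E S a hS1, efield_eq E S b hS1, mfield_eq E S a hS1, mfield_eq E S b hS1]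
  have he : mag E S a / 2 ^ (S-1) ≤ mag E S b / 2 ^ (S-1) := Nat.div_le_div_right hab
  rcases Nat.lt_or_ge (mag E S a / 2 ^ (S-1)) (mag E S b / 2 ^ (S-1)) with h | h
  · exact Or.inl h
  · have heq : mag E S a / 2 ^ (S-1) = mag E S b / 2 ^ (S-1) := le_antisymm he h
    right
    refine ⟨heq, ?_⟩
    have h1 := Nat.div_add_mod (mag E S a) (2 ^ (S-1))
    have h2 := Nat.div_add_mod (mag E S b) (2 ^ (S-1))
    rw [heq] at h1
    have : 2 ^ (S-1) * (mag E S b / 2 ^ (S-1)) + mag E S a % 2 ^ (S-1)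
        ≤ 2 ^ (S-1) * (mag E S b / 2 ^ (S-1)) + mag E S b % 2 ^ (S-1) := by
      rw [h1, h2]; exact hab
    exact Nat.le_of_add_le_add_left this

lemma val_mono (E S : ℕ) (hE : 2 ≤ E) (hS : 2 ≤ S) {u v : BitVec (E + S)}
    (hu : ¬ FP.isNaN E S u) (hv : ¬ FP.isNaN E S v)
    (hk : key E S u ≤ key E S v) : FP.val E S u ≤ FP.val E S v := by
  have hS1 : 1 ≤ S := by omega
  have core : ∀ a b : BitVec (E + S), ¬ FP.isNaN E S a → ¬ FP.isNaN E S b →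
      mag E S a ≤ mag E S b →
      fpval E S false (FP.efield E S a) (FP.mfield E S a) ≤
        fpval E S false (FP.efield E S b) (FP.mfield E S b) := by
    intro a b ha hb hab
    exact fpval_mono E S hE hS (mfield_lt E S a) (mfield_lt E S b) ha hb
      (efield_lt E S b) (lex_of_mag_le E S hS1 hab)
  rw [val_eq, val_eq]
  unfold key at hk
  cases hsu : FP.sgn E S u <;> cases hsv : FP.sgn E S v <;> rw [hsu, hsv] at hk
  · -- both false
    rw [if_neg Bool.false_ne_true, if_neg Bool.false_ne_true] at hk
    exact core u v hu hv (by exact_mod_cast hk)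
  · -- u false, v true : mags are both 0
    rw [if_neg Bool.false_ne_true, if_pos rfl] at hk
    have hmu : mag E S u = 0 := by omega
    have hmv : mag E S v = 0 := by omega
    have heu : FP.efield E S u = 0 := by rw [efield_eq E S u hS1, hmu]; simp
    have hev : FP.efield E S v = 0 := by rw [efield_eq E S v hS1, hmv]; simp
    have hmu' : FP.mfield E S u = 0 := by rw [mfield_eq E S u hS1, hmu]; simp
    have hmv' : FP.mfield E S v = 0 := by rw [mfield_eq E S v hS1, hmv]; simp
    rw [heu, hev, hmu', hmv']
    have hne : (0:ℕ) ≠ 2 ^ E - 1 := by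
      have : 4 ≤ 2 ^ E := by
        calc (4:ℕ) = 2 ^ 2 := rfl
          _ ≤ 2 ^ E := Nat.pow_le_pow_right (by norm_num) hE
      omega
    unfold fpval
    rw [if_neg hne, if_neg hne, if_pos rfl, if_pos rfl, if_pos rfl, if_neg Bool.false_ne_true,
      EReal.coe_le_coe_iff]
    simp
  · -- u true, v false
    rw [fpval_neg]
    calc -fpval E S false (FP.efield E S u) (FP.mfield E S u) ≤ -0 := by
          rw [EReal.neg_le_neg_iff]; exact fpval_false_nonneg E S _ _
      _ = 0 := neg_zero
      _ ≤ _ := fpval_false_nonneg E S _ _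
  · -- both true
    rw [if_pos rfl, if_pos rfl] at hk
    rw [fpval_neg, fpval_neg, EReal.neg_le_neg_iff]
    exact core v u hv hu (by omega)

lemma getMsbD_testBit (E S : ℕ) {k : ℕ} (hk : k < E + S) (x : BitVec (E + S)) :
    x.getMsbD k = x.toNat.testBit (E + S - 1 - k) := by
  rw [BitVec.getMsbD_eq_getLsbD, decide_eq_true hk, Bool.true_and]
  rfl

lemma mag_lt_of_bits (E S : ℕ) {u v : BitVec (E + S)} {k : ℕ} (hk1 : 1 ≤ k) (hkn : k < E + S)
    (hagree : ∀ j, 1 ≤ j → j < k → u.getMsbD j = v.getMsbD j)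
    (hu : u.getMsbD k = false) (hv : v.getMsbD k = true) :
    mag E S u < mag E S v := by
  apply Nat.lt_of_testBit (E + S - 1 - k)
  · rw [mag, Nat.testBit_mod_two_pow, decide_eq_true (by omega : E + S - 1 - k < E + S - 1),
      Bool.true_and, ← getMsbD_testBit E S hkn]
    exact hu
  · rw [mag, Nat.testBit_mod_two_pow, decide_eq_true (by omega : E + S - 1 - k < E + S - 1),
      Bool.true_and, ← getMsbD_testBit E S hkn]
    exact hv
  · intro j hj
    by_cases hjn : j < E + S - 1
    · rw [mag, mag, Nat.testBit_mod_two_pow, Nat.testBit_mod_two_pow,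
        decide_eq_true hjn, Bool.true_and, Bool.true_and]
      have hj1 : E + S - 1 - j < E + S := by omega
      have hjj : E + S - 1 - (E + S - 1 - j) = j := by omega
      have hu' := getMsbD_testBit E S hj1 u
      have hv' := getMsbD_testBit E S hj1 v
      rw [hjj] at hu' hv'
      rw [← hu', ← hv']
      exact hagree (E + S - 1 - j) (by omega) (by omega)
    · rw [mag, mag, Nat.testBit_mod_two_pow, Nat.testBit_mod_two_pow,
        decide_eq_false (by omega : ¬ j < E + S - 1)]
      simp

/-- the "low-side" comparison lemma. -/
lemma side_le (E S : ℕ) (hE : 2 ≤ E) (hS : 2 ≤ S) {u v : BitVec (E + S)} {k : ℕ}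
    (hkn : k < E + S) (hu : ¬ FP.isNaN E S u) (hv : ¬ FP.isNaN E S v)
    (hagree : ∀ j < k, u.getMsbD j = v.getMsbD j)
    (hcond : (k = 0 ∧ FP.sgn E S u = true ∧ FP.sgn E S v = false) ∨
      (1 ≤ k ∧ u.getMsbD k = FP.sgn E S u ∧ v.getMsbD k ≠ FP.sgn E S u)) :
    FP.val E S u ≤ FP.val E S v := by
  apply val_mono E S hE hS hu hv
  unfold key
  rcases hcond with ⟨-, hsu, hsv⟩ | ⟨hk1, huk, hvk⟩
  · rw [hsu, hsv, if_pos rfl, if_neg Bool.false_ne_true]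
    have h1 : (0:ℤ) ≤ (mag E S u : ℤ) := Int.ofNat_nonneg _
    have h2 : (0:ℤ) ≤ (mag E S v : ℤ) := Int.ofNat_nonneg _
    omega
  · have hsgn : FP.sgn E S v = FP.sgn E S u := (hagree 0 (by omega)).symm
    rw [hsgn]
    have hag : ∀ j, 1 ≤ j → j < k → u.getMsbD j = v.getMsbD j := fun j _ hj => hagree j hj
    cases hsu : FP.sgn E S u <;> rw [hsu] at huk hvk
    · -- sign false: u_k = false, v_k = true
      have hvk' : v.getMsbD k = true := by
        cases h : v.getMsbD k
        · exact absurd h hvk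
        · rfl
      have := mag_lt_of_bits E S hk1 hkn hag huk hvk'
      rw [if_neg Bool.false_ne_true, if_neg Bool.false_ne_true]
      omega
    · -- sign true: u_k = true, v_k = false
      have hvk' : v.getMsbD k = false := by
        cases h : v.getMsbD k
        · rfl
        · exact absurd h hvk
      have := mag_lt_of_bits E S hk1 hkn (fun j h1 h2 => (hag j h1 h2).symm) hvk' huk
      rw [if_pos rfl, if_pos rfl]
      omega

lemma msb_ext (E S : ℕ) {u v : BitVec (E + S)}
    (h : ∀ j < E + S, u.getMsbD j = v.getMsbD j) : u = v := by
  apply BitVec.eq_of_getLsbD_eq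
  intro i
  intro hi
  have hk : E + S - 1 - (E + S - 1 - (i:ℕ)) = (i:ℕ) := by omega
  have h2 := h (E + S - 1 - (i:ℕ)) (by omega)
  rw [getMsbD_testBit E S (by omega) u, getMsbD_testBit E S (by omega) v, hk] at h2
  exact h2

end FPaux

theorem fp_lex_greedy_attains_min (E S : ℕ) (hE : 2 ≤ E) (hS : 2 ≤ S)
    (𝒮 : Set (BitVec (E + S))) (hne : 𝒮.Nonempty)
    (hnonan : ∀ y ∈ 𝒮, ¬ FP.isNaN E S y)
    (x : BitVec (E + S)) (hx : x ∈ 𝒮)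
    (hgreedy : ∀ k < E + S, ∀ z : BitVec (E + S), ¬ FP.isNaN E S z →
        (∀ j < k, z.getMsbD j = x.getMsbD j) →
        (∀ w : BitVec (E + S), ¬ FP.isNaN E S w →
          (∀ j < k, w.getMsbD j = x.getMsbD j) → FP.val E S z ≤ FP.val E S w) →
        (∃ y ∈ 𝒮, (∀ j < k, y.getMsbD j = x.getMsbD j) ∧
          y.getMsbD k = z.getMsbD k) →
        x.getMsbD k = z.getMsbD k) :
    ∀ y ∈ 𝒮, FP.val E S x ≤ FP.val E S y := by
  have hnx : ¬ FP.isNaN E S x := hnonan x hx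
  have main : ∀ d k, k + d = E + S → ∀ y ∈ 𝒮, (∀ j < k, y.getMsbD j = x.getMsbD j) →
      FP.val E S x ≤ FP.val E S y := by
    intro d
    induction d with
    | zero =>
      intro k hk y _ hagree
      have : y = x := FPaux.msb_ext E S (fun j hj => hagree j (by omega))
      rw [this]
    | succ d ih =>
      intro k hk y hy hagree
      have hkn : k < E + S := by omega
      by_cases hbk : y.getMsbD k = x.getMsbD k
      · exact ih (k + 1) (by omega) y hy (fun j hj => by
          rcases Nat.lt_succ_iff_lt_or_eq.mp hj with h | h
          · exact hagree j h
          · rw [h]; exact hbk)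
      · -- y differs from x at bit k
        have hny : ¬ FP.isNaN E S y := hnonan y hy
        have bool3 : ∀ a b c : Bool, ¬ a = b → ¬ c = b → a = c := by decide
        -- if y is on the low side, derive a contradiction with the greedy hypothesis
        have build : (∀ w : BitVec (E + S), ¬ FP.isNaN E S w →
              (∀ j < k, w.getMsbD j = x.getMsbD j) → ¬ w.getMsbD k = y.getMsbD k →
              (∀ z : BitVec (E + S), ¬ FP.isNaN E S z →
                (∀ j < k, z.getMsbD j = x.getMsbD j) → z.getMsbD k = y.getMsbD k →
                FP.val E S z ≤ FP.val E S w)) → False := by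
          intro hside
          set T : Set (BitVec (E + S)) :=
            {w | ¬ FP.isNaN E S w ∧ (∀ j < k, w.getMsbD j = x.getMsbD j) ∧
              w.getMsbD k = y.getMsbD k} with hT
          have hyT : y ∈ T := ⟨hny, hagree, rfl⟩
          obtain ⟨z, hzT, hzmin⟩ :=
            Set.exists_min_image T (FP.val E S) (Set.toFinite T) ⟨y, hyT⟩
          obtain ⟨hznan, hzpre, hzk⟩ := hzT
          have hattr : ∀ w : BitVec (E + S), ¬ FP.isNaN E S w →
              (∀ j < k, w.getMsbD j = x.getMsbD j) → FP.val E S z ≤ FP.val E S w := by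
            intro w hnw hwpre
            by_cases hwk : w.getMsbD k = y.getMsbD k
            · exact hzmin w ⟨hnw, hwpre, hwk⟩
            · exact hside w hnw hwpre hwk z hznan hzpre hzk
          have hcon := hgreedy k hkn z hznan hzpre hattr ⟨y, hy, hagree, hzk.symm⟩
          rw [hcon, ← hzk] at hbk
          exact hbk rfl
        rcases Nat.eq_zero_or_pos k with hk0 | hk1
        · -- k = 0 : sign bit
          subst hk0
          by_cases hsx : x.getMsbD 0 = true
          · -- x on the low (negative) side
            apply FPaux.side_le E S hE hS hkn hnx hny
              (fun j hj => absurd hj (Nat.not_lt_zero j))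
            left
            refine ⟨rfl, hsx, ?_⟩
            unfold FP.sgn
            cases h : y.getMsbD 0
            · rfl
            · exact absurd (h.trans hsx.symm) hbk
          · -- x_0 = false, y_0 = true : y on the low side
            exfalso
            apply build
            intro w hnw _ hwk z hznan _ hzk
            have hx0 : x.getMsbD 0 = false := by
              cases h : x.getMsbD 0
              · rfl
              · exact absurd h hsx
            have hy0 : y.getMsbD 0 = true := by
              cases h : y.getMsbD 0
              · exact absurd (h.trans hx0.symm) hbk
              · rfl
            apply FPaux.side_le E S hE hS hkn hznan hnw
              (fun j hj => absurd hj (Nat.not_lt_zero j))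
            left
            refine ⟨rfl, ?_, ?_⟩
            · unfold FP.sgn; rw [hzk, hy0]
            · unfold FP.sgn
              rw [hy0] at hwk
              cases h : w.getMsbD 0
              · rfl
              · exact absurd h hwk
        · -- 1 ≤ k
          have hsgnx : FP.sgn E S x = x.getMsbD 0 := rfl
          by_cases hxk : x.getMsbD k = x.getMsbD 0
          · -- x on the low side
            apply FPaux.side_le E S hE hS hkn hnx hny (fun j hj => (hagree j hj).symm)
            right
            refine ⟨hk1, by rw [hsgnx]; exact hxk, ?_⟩
            rw [hsgnx, ← hxk]
            exact fun h => hbk h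
          · -- y on the low side
            exfalso
            apply build
            intro w hnw hwpre hwk z hznan hzpre hzk
            have hyk : y.getMsbD k = x.getMsbD 0 := bool3 _ _ _ hbk (fun h => hxk h.symm)
            apply FPaux.side_le E S hE hS hkn hznan hnw
              (fun j hj => (hzpre j hj).trans (hwpre j hj).symm)
            right
            have hsgnz : FP.sgn E S z = x.getMsbD 0 := hzpre 0 hk1
            refine ⟨hk1, ?_, ?_⟩
            · rw [hsgnz, hzk, hyk]
            · rw [hsgnz, ← hyk]
              exact hwk
  intro y hy
  exact main (E + S) 0 (by omega) y hy (fun j hj => absurd hj (Nat.not_lt_zero j))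
end
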